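/- arXiv:0704.2282 — 5 statements merged into one kernel-verified Lean document; each statement's English description precedes it below -/
import Mathlib

section
/- Let P be a finite set with #P ≠ 3 and let K₁ = { {p} | p ∈ P }. Let K be a cell over P such that every port of P is flexible for K and the Hamming diameter of K is 2. Then K is a Kekulé cell over P if and only if there exists g ⊆ P such that K = g ⊕ K₁. -/
open scoped symmDiff

namespace Kekule

abbrev Node := ℕ
abbrev Graph := Finset (Finset Node)

/-- `G` is a graph: every edge is a 2-element set of nodes. -/
def IsGraph (G : Graph) : Prop := ∀ e ∈ G, e.card = 2

/-- The nodes of a graph: the elements of its edges. -/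
def nodes (G : Graph) : Finset Node := G.biUnion id

/-- The number of edges of `G` containing `v`. -/
def deg (G : Graph) (v : Node) : ℕ := (G.filter (fun e => v ∈ e)).card

/-- A port is a node contained in exactly one edge. -/
def ports (G : Graph) : Finset Node := (nodes G).filter (fun v => deg G v = 1)

/-- An internal node is a node that is not a port. -/
def internal (G : Graph) : Finset Node := (nodes G).filter (fun v => deg G v ≠ 1)

/-- A Kekulé state of `G`: a subgraph `W ⊆ G` such that every internal node
of `G` lies in exactly one edge of `W`. -/
def IsKekule (G W : Graph) : Prop := W ⊆ G ∧ ∀ v ∈ internal G, deg W v = 1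

/-- A curve in `G`: a subgraph `C ⊆ G` such that every node of `C` that is
internal in `G` lies in exactly two edges of `C`. -/
def IsCurve (G C : Graph) : Prop :=
  C ⊆ G ∧ ∀ v ∈ nodes C, v ∈ internal G → deg C v = 2

/-- `(C, W)` is an alternating curve in `G`: both are subgraphs of `G`,
`C` is a curve in `G`, and `W ∩ C` is a Kekulé state of `C`. -/
def IsAlternating (G C W : Graph) : Prop :=
  W ⊆ G ∧ IsCurve G C ∧ IsKekule C (W ∩ C)

/-- `W|P`: the set of ports in `P` that lie in some edge of `W`. -/
def rest (W : Graph) (P : Finset Node) : Finset Node := P ∩ nodes W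

/-- The set of Kekulé port assignments of `G`. -/
def KP (G : Graph) : Set (Finset Node) :=
  {g | ∃ W, IsKekule G W ∧ rest W (ports G) = g}

/-- A cell `K` over `P` is a Kekulé cell if it is the set of Kekulé port
assignments of some graph with port set `P`. -/
def IsKekuleCell (P : Finset Node) (K : Set (Finset Node)) : Prop :=
  ∃ G, IsGraph G ∧ ports G = P ∧ KP G = K

/-- A channel: a 2-element subset of `P`. -/
def IsChannel (P : Finset Node) (c : Finset Node) : Prop := c ⊆ P ∧ c.card = 2

/-- A port `p` is flexible for a cell `K`. -/
def Flexible (K : Set (Finset Node)) (p : Node) : Prop :=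
  ∃ g ∈ K, ∃ g' ∈ K, p ∈ g ∧ p ∉ g'

/-- Hamming distance between two port assignments. -/
def hdist (k k' : Finset Node) : ℕ := (k ∆ k').card

/-- The Hamming diameter of `K` equals `n`. -/
def HamDiamEq (K : Set (Finset Node)) (n : ℕ) : Prop :=
  (∃ k ∈ K, ∃ k' ∈ K, hdist k k' = n) ∧ ∀ k ∈ K, ∀ k' ∈ K, hdist k k' ≤ n

/-- `G` is connected: nonempty, and any two distinct nodes are joined by a walk. -/
def Connected (G : Graph) : Prop :=
  G.Nonempty ∧ ∀ p ∈ nodes G, ∀ q ∈ nodes G, p ≠ q →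
    ∃ (n : ℕ) (f : ℕ → Node), f 0 = p ∧ f n = q ∧
      ∀ i < n, ({f i, f (i + 1)} : Finset Node) ∈ G

/-- `C` is a simple path between `p` and `q`. -/
def IsSimplePath (C : Graph) (p q : Node) : Prop :=
  Connected C ∧ ports C = {p, q} ∧
    ∀ v ∈ nodes C, v ≠ p → v ≠ q → deg C v = 2

/-- A cycle: a connected graph all of whose nodes lie in exactly two edges. -/
def IsCycle (C : Graph) : Prop :=
  Connected C ∧ ∀ v ∈ nodes C, deg C v = 2

/-- A semi-Kekulé state of `G`: every internal node of `G` lies in an odd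
number of edges of `W`. -/
def IsSemiKekule (G W : Graph) : Prop :=
  W ⊆ G ∧ ∀ v ∈ internal G, deg W v % 2 = 1

/-- The signature of `G`. -/
def sig (G : Graph) : ℕ := (internal G).card % 2

/-- `G` is omniconjugated. -/
def Omniconjugated (G : Graph) : Prop :=
  2 ≤ (ports G).card ∧ KP G = {g | g ⊆ ports G ∧ g.card % 2 = sig G}

instance : Std.Commutative (α := Finset Node) (· ∆ ·) := ⟨symmDiff_comm⟩
instance : Std.Associative (α := Finset Node) (· ∆ ·) := ⟨symmDiff_assoc⟩

/-- The `⊕`-sum of a finite family of port assignments. -/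
def xorSum (D : Finset (Finset Node)) : Finset Node := D.fold (· ∆ ·) ∅ id

private lemma sd_cancel (a b c : Finset Node) : (a ∆ c) ∆ (b ∆ c) = a ∆ b := by
  ext x; simp only [Finset.mem_symmDiff]; tauto

private lemma sd_recover (a b : Finset Node) : b ∆ (a ∆ b) = a := by
  ext x; simp only [Finset.mem_symmDiff]; tauto

private lemma sd_right (a : Finset Node) (b : Finset Node) : (a ∆ b) ∆ b = a := by
  ext x; simp only [Finset.mem_symmDiff]; tauto

private lemma sd_assoc (a b c : Finset Node) : (a ∆ b) ∆ c = a ∆ (b ∆ c) := by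
  ext x; simp only [Finset.mem_symmDiff]; tauto

private lemma sd_eq_iff {a b : Finset Node} : a ∆ b = ∅ ↔ a = b := by
  constructor
  · intro h; ext x
    have := Finset.ext_iff.mp h x
    simp only [Finset.mem_symmDiff, Finset.notMem_empty, iff_false] at this
    tauto
  · rintro rfl; ext x; simp [Finset.mem_symmDiff]

private lemma sd_disj_union {a b : Finset Node} (h : Disjoint a b) : a ∆ b = a ∪ b := by
  ext x; simp only [Finset.mem_symmDiff, Finset.mem_union]
  constructor
  · tauto
  · rintro (hx | hx)
    · exact Or.inl ⟨hx, fun hb => (Finset.disjoint_left.mp h) hx hb⟩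
    · exact Or.inr ⟨hx, fun ha => (Finset.disjoint_left.mp h) ha hx⟩

private lemma sd_subset_union (a b : Finset Node) : a ∆ b ⊆ a ∪ b := by
  intro x hx; rw [Finset.mem_symmDiff] at hx
  rcases hx with ⟨h,_⟩|⟨h,_⟩ <;> simp [h]

private lemma card_sd_add (a b : Finset Node) :
    (a ∆ b).card + 2 * (a ∩ b).card = a.card + b.card := by
  have h1 : a ∆ b = (a ∪ b) \ (a ∩ b) := by
    ext x; simp only [Finset.mem_symmDiff, Finset.mem_sdiff, Finset.mem_union,
      Finset.mem_inter]; tauto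
  have h2 : (a ∩ b) ⊆ a ∪ b := (Finset.inter_subset_left).trans Finset.subset_union_left
  have h3 := Finset.card_sdiff_add_card_eq_card h2
  have h4 := Finset.card_union_add_card_inter a b
  rw [h1]; omega

private lemma pair_eq {a b : Node} (hab : a ≠ b) : ({a, b} : Finset Node) = {a} ∆ {b} := by
  ext x
  simp only [Finset.mem_symmDiff, Finset.mem_insert, Finset.mem_singleton]
  constructor
  · rintro (rfl | rfl)
    · exact Or.inl ⟨rfl, fun h => hab h⟩
    · exact Or.inr ⟨rfl, fun h => hab h.symm⟩
  · tauto


private lemma sd_cancel_left (g a b : Finset Node) : (g ∆ a) ∆ (g ∆ b) = a ∆ b := by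
  ext x; simp only [Finset.mem_symmDiff]; tauto

lemma abstract_classify (P : Finset Node) (hP : P.card ≠ 3)
    (K : Set (Finset Node)) (hKP : ∀ k ∈ K, k ⊆ P)
    (hflex : ∀ p ∈ P, Flexible K p)
    (hdiam : HamDiamEq K 2)
    (heven : ∀ k ∈ K, ∀ k' ∈ K, Even (hdist k k')) :
    ∃ g : Finset Node, g ⊆ P ∧
      K = (fun k => g ∆ k) '' {k : Finset Node | ∃ p ∈ P, k = {p}} := by
  obtain ⟨⟨k₀, hk₀, k₁, hk₁, hd01⟩, hle⟩ := hdiam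
  set E : Finset Node → Prop := fun e => ∃ k ∈ K, k ≠ k₀ ∧ e = k ∆ k₀ with hE
  have hcard2 : ∀ e, E e → e.card = 2 := by
    rintro e ⟨k, hk, hne, rfl⟩
    have h1 : hdist k k₀ ≤ 2 := hle k hk k₀ hk₀
    have h2 : Even (hdist k k₀) := heven k hk k₀ hk₀
    have h3 : hdist k k₀ ≠ 0 := by
      intro h0
      exact hne (sd_eq_iff.mp (Finset.card_eq_zero.mp h0))
    obtain ⟨m, hm⟩ := h2
    unfold hdist at *
    omega
  have hsubP : ∀ e, E e → e ⊆ P := by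
    rintro e ⟨k, hk, hne, rfl⟩
    exact (sd_subset_union k k₀).trans (Finset.union_subset (hKP k hk) (hKP k₀ hk₀))
  have hmeet : ∀ e e', E e → E e' → (e ∩ e').Nonempty := by
    rintro e e' he he'
    by_contra hcon
    rw [Finset.not_nonempty_iff_eq_empty] at hcon
    have hdisj : Disjoint e e' := Finset.disjoint_iff_inter_eq_empty.mpr hcon
    have hec := hcard2 _ he
    have hec' := hcard2 _ he'
    obtain ⟨k, hk, hkne, rfl⟩ := he
    obtain ⟨k', hk', hkne', rfl⟩ := he'
    have h1 : (k ∆ k₀) ∆ (k' ∆ k₀) = k ∆ k' := sd_cancel k k' k₀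
    have h2 : (k ∆ k₀) ∆ (k' ∆ k₀) = (k ∆ k₀) ∪ (k' ∆ k₀) := sd_disj_union hdisj
    have h3 : ((k ∆ k₀) ∪ (k' ∆ k₀)).card = 4 := by
      rw [Finset.card_union_of_disjoint hdisj, hec, hec']
    have h4 : hdist k k' ≤ 2 := hle k hk k' hk'
    unfold hdist at h4
    rw [← h1, h2] at h4
    omega
  have hcover : ∀ p ∈ P, ∃ e, E e ∧ p ∈ e := by
    intro p hp
    obtain ⟨a, ha, b, hb, hpa, hpb⟩ := hflex p hp
    by_cases hpk : p ∈ k₀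
    · refine ⟨b ∆ k₀, ⟨b, hb, ?_, rfl⟩, ?_⟩
      · rintro rfl; exact hpb hpk
      · rw [Finset.mem_symmDiff]; exact Or.inr ⟨hpk, hpb⟩
    · refine ⟨a ∆ k₀, ⟨a, ha, ?_, rfl⟩, ?_⟩
      · rintro rfl; exact hpk hpa
      · rw [Finset.mem_symmDiff]; exact Or.inl ⟨hpa, hpk⟩
  have hE0 : E (k₁ ∆ k₀) := by
    refine ⟨k₁, hk₁, ?_, rfl⟩
    intro h; rw [h] at hd01; unfold hdist at hd01; simp at hd01
  obtain ⟨a, b, hab, he0⟩ := Finset.card_eq_two.mp (hcard2 _ hE0)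
  have haP : a ∈ P := hsubP _ hE0 (by rw [he0]; simp)
  have hbP : b ∈ P := hsubP _ hE0 (by rw [he0]; simp)
  have hcenter : ∃ c₀, c₀ ∈ P ∧ ∀ e, E e → c₀ ∈ e := by
    by_cases hA : ∀ e, E e → a ∈ e
    · exact ⟨a, haP, hA⟩
    by_cases hB : ∀ e, E e → b ∈ e
    · exact ⟨b, hbP, hB⟩
    exfalso
    push_neg at hA hB
    obtain ⟨eb, heb, hanb⟩ := hA
    obtain ⟨ea, hea, hbna⟩ := hB
    have hbeb : b ∈ eb := by
      obtain ⟨x, hx⟩ := hmeet _ _ hE0 heb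
      rw [Finset.mem_inter, he0] at hx
      rcases hx with ⟨hx1, hx2⟩
      simp only [Finset.mem_insert, Finset.mem_singleton] at hx1
      rcases hx1 with rfl | rfl
      · exact absurd hx2 hanb
      · exact hx2
    have haea : a ∈ ea := by
      obtain ⟨x, hx⟩ := hmeet _ _ hE0 hea
      rw [Finset.mem_inter, he0] at hx
      rcases hx with ⟨hx1, hx2⟩
      simp only [Finset.mem_insert, Finset.mem_singleton] at hx1
      rcases hx1 with rfl | rfl
      · exact hx2
      · exact absurd hx2 hbna
    -- eb = {b, c} with c ∉ {a, b}
    have hbceq : ∃ c, c ≠ a ∧ c ≠ b ∧ eb = {b, c} := by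
      obtain ⟨b', c, hbc, hebeq⟩ := Finset.card_eq_two.mp (hcard2 _ heb)
      rw [hebeq] at hbeb hanb
      simp only [Finset.mem_insert, Finset.mem_singleton] at hbeb
      rcases hbeb with rfl | rfl
      · refine ⟨c, ?_, Ne.symm hbc, hebeq⟩
        intro h; exact hanb (by rw [h]; simp)
      · refine ⟨b', ?_, hbc, by rw [hebeq, Finset.pair_comm]⟩
        intro h; exact hanb (by rw [h]; simp)
    obtain ⟨c, hca, hcb, hebc⟩ := hbceq
    have heac : ea = {a, c} := by
      have hd : ∃ d, d ≠ a ∧ d ≠ b ∧ ea = {a, d} := by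
        obtain ⟨a', d, had, heaeq⟩ := Finset.card_eq_two.mp (hcard2 _ hea)
        rw [heaeq] at haea hbna
        simp only [Finset.mem_insert, Finset.mem_singleton] at haea
        rcases haea with rfl | rfl
        · refine ⟨d, Ne.symm had, ?_, heaeq⟩
          intro h; exact hbna (by rw [h]; simp)
        · refine ⟨a', had, ?_, by rw [heaeq, Finset.pair_comm]⟩
          intro h; exact hbna (by rw [h]; simp)
      obtain ⟨d', hd'a, hd'b, heq⟩ := hd
      have hdc : d' = c := by
        obtain ⟨x, hx⟩ := hmeet _ _ hea heb
        rw [Finset.mem_inter, heq, hebc] at hx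
        simp only [Finset.mem_insert, Finset.mem_singleton] at hx
        unfold Node at *
        omega
      rw [heq, hdc]
    have hPabc : P = {a, b, c} := by
      apply Finset.Subset.antisymm
      · intro p hp
        obtain ⟨e, he, hpe⟩ := hcover p hp
        by_contra hpnot
        simp only [Finset.mem_insert, Finset.mem_singleton] at hpnot
        push_neg at hpnot
        obtain ⟨hpa, hpb, hpc⟩ := hpnot
        obtain ⟨x1, hx1⟩ := hmeet _ _ he hE0
        obtain ⟨x2, hx2⟩ := hmeet _ _ he hea
        obtain ⟨x3, hx3⟩ := hmeet _ _ he heb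
        rw [Finset.mem_inter, he0] at hx1
        rw [Finset.mem_inter, heac] at hx2
        rw [Finset.mem_inter, hebc] at hx3
        obtain ⟨u, v, huv, heuv⟩ := Finset.card_eq_two.mp (hcard2 _ he)
        rw [heuv] at hpe hx1 hx2 hx3
        simp only [Finset.mem_insert, Finset.mem_singleton] at hpe hx1 hx2 hx3
        unfold Node at *
        omega
      · intro x hx
        simp only [Finset.mem_insert, Finset.mem_singleton] at hx
        rcases hx with rfl | rfl | rfl
        · exact haP
        · exact hbP
        · exact hsubP _ heb (by rw [hebc]; simp)
    apply hP
    rw [hPabc]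
    rw [Finset.card_insert_of_notMem (by simp [hab, Ne.symm hca]),
      Finset.card_insert_of_notMem (by simp [Ne.symm hcb]), Finset.card_singleton]
  obtain ⟨c₀, hc₀P, hc₀⟩ := hcenter
  refine ⟨k₀ ∆ {c₀}, ?_, ?_⟩
  · exact (sd_subset_union k₀ {c₀}).trans
      (Finset.union_subset (hKP k₀ hk₀) (by simp [hc₀P]))
  ext k
  simp only [Set.mem_image, Set.mem_setOf_eq]
  constructor
  · intro hk
    by_cases hkk : k = k₀
    · exact ⟨{c₀}, ⟨c₀, hc₀P, rfl⟩, by rw [sd_right k₀ {c₀}, hkk]⟩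
    · have heE : E (k ∆ k₀) := ⟨k, hk, hkk, rfl⟩
      have hc : c₀ ∈ k ∆ k₀ := hc₀ _ heE
      obtain ⟨u, v, huv, heq⟩ := Finset.card_eq_two.mp (hcard2 _ heE)
      have hq : ∃ q, q ≠ c₀ ∧ k ∆ k₀ = {c₀, q} := by
        rw [heq] at hc ⊢
        simp only [Finset.mem_insert, Finset.mem_singleton] at hc
        rcases hc with rfl | rfl
        · exact ⟨v, Ne.symm huv, rfl⟩
        · exact ⟨u, huv, Finset.pair_comm u c₀⟩
      obtain ⟨q, hqc, hkq⟩ := hq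
      have hqP : q ∈ P := hsubP _ heE (by rw [hkq]; simp)
      refine ⟨{q}, ⟨q, hqP, rfl⟩, ?_⟩
      have hkrec : k = k₀ ∆ (k ∆ k₀) := (sd_recover k k₀).symm
      rw [sd_assoc, ← pair_eq (Ne.symm hqc), ← hkq, ← hkrec]
  · rintro ⟨s, ⟨p, hpP, rfl⟩, rfl⟩
    by_cases hpc : p = c₀
    · subst hpc
      rw [sd_right]
      exact hk₀
    · obtain ⟨e, heE, hpe⟩ := hcover p hpP
      have hce : c₀ ∈ e := hc₀ _ heE
      have hecp : e = {c₀, p} := by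
        have h2 := hcard2 _ heE
        have hsub : ({c₀, p} : Finset Node) ⊆ e := by
          intro x hx
          simp only [Finset.mem_insert, Finset.mem_singleton] at hx
          rcases hx with rfl | rfl
          exacts [hce, hpe]
        refine (Finset.eq_of_subset_of_card_le hsub ?_).symm
        rw [h2, Finset.card_insert_of_notMem (by simp [Ne.symm hpc]), Finset.card_singleton]
      obtain ⟨k', hk', hne', hkeq⟩ := heE
      have hrec : k' = k₀ ∆ (k' ∆ k₀) := (sd_recover k' k₀).symm
      have : k₀ ∆ {c₀} ∆ {p} = k' := by
        rw [sd_assoc, ← pair_eq (fun h => hpc h.symm), ← hecp, hkeq, ← hrec]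
      rw [this]; exact hk'

lemma mem_nodes {G : Graph} {v : Node} : v ∈ nodes G ↔ ∃ e ∈ G, v ∈ e := by
  simp [nodes]

lemma parity (G W : Graph) (hG : IsGraph G) (hW : IsKekule G W) :
    (rest W (ports G)).card + (internal G).card = 2 * W.card := by
  obtain ⟨hWG, hdeg⟩ := hW
  have key : ∑ v ∈ nodes G, deg W v = 2 * W.card := by
    unfold deg
    have h1 : ∀ v, (W.filter (fun e => v ∈ e)).card = ∑ e ∈ W, if v ∈ e then 1 else 0 := by
      intro v; rw [Finset.card_filter]
    calc ∑ v ∈ nodes G, (W.filter (fun e => v ∈ e)).card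
        = ∑ v ∈ nodes G, ∑ e ∈ W, if v ∈ e then 1 else 0 := by
          exact Finset.sum_congr rfl (fun v _ => h1 v)
      _ = ∑ e ∈ W, ∑ v ∈ nodes G, if v ∈ e then 1 else 0 := Finset.sum_comm
      _ = ∑ e ∈ W, ((nodes G).filter (fun v => v ∈ e)).card := by
          exact Finset.sum_congr rfl (fun e _ => (Finset.card_filter _ _).symm)
      _ = ∑ e ∈ W, e.card := by
          refine Finset.sum_congr rfl (fun e he => ?_)
          congr 1
          apply Finset.Subset.antisymm
          · intro v hv
            exact (Finset.mem_filter.mp hv).2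
          · intro v hv
            exact Finset.mem_filter.mpr ⟨mem_nodes.mpr ⟨e, hWG he, hv⟩, hv⟩
      _ = ∑ _e ∈ W, 2 := Finset.sum_congr rfl (fun e he => hG e (hWG he))
      _ = 2 * W.card := by rw [Finset.sum_const, smul_eq_mul, Nat.mul_comm]
  have hsplit : ∑ v ∈ ports G, deg W v + ∑ v ∈ internal G, deg W v
      = ∑ v ∈ nodes G, deg W v :=
    Finset.sum_filter_add_sum_filter_not (nodes G) (fun v => deg G v = 1) _
  have hint : ∑ v ∈ internal G, deg W v = (internal G).card := by
    rw [Finset.sum_congr rfl hdeg, Finset.sum_const, smul_eq_mul, Nat.mul_one]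
  have hport : ∑ v ∈ ports G, deg W v = (rest W (ports G)).card := by
    have hr : rest W (ports G) = (ports G).filter (fun v => v ∈ nodes W) := by
      rw [rest, Finset.filter_mem_eq_inter]
    rw [hr, Finset.card_filter]
    refine Finset.sum_congr rfl (fun v hv => ?_)
    have hv1 : deg G v = 1 := (Finset.mem_filter.mp hv).2
    have hle : deg W v ≤ deg G v :=
      Finset.card_le_card (Finset.filter_subset_filter _ hWG)
    by_cases hvw : v ∈ nodes W
    · obtain ⟨e, heW, hve⟩ := mem_nodes.mp hvw
      have : 0 < deg W v := Finset.card_pos.mpr ⟨e, Finset.mem_filter.mpr ⟨heW, hve⟩⟩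
      simp only [hvw, if_true]
      omega
    · simp only [hvw, if_false]
      rw [deg, Finset.card_eq_zero, Finset.filter_eq_empty_iff]
      intro e heW hve
      exact hvw (mem_nodes.mpr ⟨e, heW, hve⟩)
  omega

/-! ### the construction -/

def ctr (P : Finset Node) : Node := P.sup id + 1
def auxn (P : Finset Node) (p : Node) : Node := ctr P + 1 + p

lemma lt_ctr {P : Finset Node} {p : Node} (hp : p ∈ P) : p < ctr P := by
  have := Finset.le_sup (f := id) hp
  simp only [id_eq] at this
  unfold ctr; unfold Node at *; omega

lemma ctr_lt_auxn (P : Finset Node) (p : Node) : ctr P < auxn P p := by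
  unfold auxn; unfold Node at *; omega

lemma mem_ne_ctr {P : Finset Node} {p : Node} (hp : p ∈ P) : p ≠ ctr P :=
  Nat.ne_of_lt (lt_ctr hp)

lemma ctr_ne_auxn (P : Finset Node) (p : Node) : ctr P ≠ auxn P p :=
  Nat.ne_of_lt (ctr_lt_auxn P p)

lemma mem_ne_auxn {P : Finset Node} {p : Node} (hp : p ∈ P) (q : Node) : p ≠ auxn P q :=
  Nat.ne_of_lt (lt_trans (lt_ctr hp) (ctr_lt_auxn P q))

lemma auxn_inj {P : Finset Node} {p q : Node} (h : auxn P p = auxn P q) : p = q := by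
  unfold auxn at h; unfold Node at *; omega

def starG (P g : Finset Node) : Graph :=
  ((P \ g).image fun p => ({ctr P, p} : Finset Node)) ∪
  ((g.image fun p => ({ctr P, auxn P p} : Finset Node)) ∪
   (g.image fun p => ({auxn P p, p} : Finset Node)))

lemma mem_starG {P g : Finset Node} {e : Finset Node} :
    e ∈ starG P g ↔
      (∃ p, (p ∈ P ∧ p ∉ g) ∧ ({ctr P, p} : Finset Node) = e) ∨
      (∃ p ∈ g, ({ctr P, auxn P p} : Finset Node) = e) ∨
      (∃ p ∈ g, ({auxn P p, p} : Finset Node) = e) := by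
  simp [starG, Finset.mem_union, Finset.mem_image, Finset.mem_sdiff]

section construction
variable {P g : Finset Node} (hg : g ⊆ P) (hP2 : 2 ≤ P.card)

include hg

lemma isGraph_starG : IsGraph (starG P g) := by
  intro e he
  rw [mem_starG] at he
  rcases he with ⟨p, ⟨hp, _⟩, rfl⟩ | ⟨p, hp, rfl⟩ | ⟨p, hp, rfl⟩
  · exact Finset.card_pair (Ne.symm (mem_ne_ctr hp))
  · exact Finset.card_pair (ctr_ne_auxn P p)
  · exact Finset.card_pair (Ne.symm (mem_ne_auxn (hg hp) p))

lemma nodes_starG (hP : P.Nonempty) :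
    nodes (starG P g) = insert (ctr P) (P ∪ g.image (auxn P)) := by
  ext v
  simp only [mem_nodes, Finset.mem_insert, Finset.mem_union, Finset.mem_image]
  constructor
  · rintro ⟨e, he, hv⟩
    rw [mem_starG] at he
    rcases he with ⟨p, ⟨hp, _⟩, rfl⟩ | ⟨p, hp, rfl⟩ | ⟨p, hp, rfl⟩ <;>
      simp only [Finset.mem_insert, Finset.mem_singleton] at hv <;>
      rcases hv with rfl | rfl
    · exact Or.inl rfl
    · exact Or.inr (Or.inl hp)
    · exact Or.inl rfl
    · exact Or.inr (Or.inr ⟨p, hp, rfl⟩)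
    · exact Or.inr (Or.inr ⟨p, hp, rfl⟩)
    · exact Or.inr (Or.inl (hg hp))
  · rintro (rfl | hv | ⟨p, hp, rfl⟩)
    · obtain ⟨p, hp⟩ := hP
      by_cases hpg : p ∈ g
      · exact ⟨{ctr P, auxn P p}, mem_starG.mpr (Or.inr (Or.inl ⟨p, hpg, rfl⟩)), by simp⟩
      · exact ⟨{ctr P, p}, mem_starG.mpr (Or.inl ⟨p, ⟨hp, hpg⟩, rfl⟩), by simp⟩
    · by_cases hvg : v ∈ g
      · exact ⟨{auxn P v, v}, mem_starG.mpr (Or.inr (Or.inr ⟨v, hvg, rfl⟩)), by simp⟩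
      · exact ⟨{ctr P, v}, mem_starG.mpr (Or.inl ⟨v, ⟨hv, hvg⟩, rfl⟩), by simp⟩
    · exact ⟨{auxn P p, p}, mem_starG.mpr (Or.inr (Or.inr ⟨p, hp, rfl⟩)), by simp⟩

lemma filter_starG_notg {p : Node} (hp : p ∈ P) (hpg : p ∉ g) :
    (starG P g).filter (fun e => p ∈ e) = {({ctr P, p} : Finset Node)} := by
  rw [Finset.eq_singleton_iff_unique_mem]
  constructor
  · rw [Finset.mem_filter]
    exact ⟨mem_starG.mpr (Or.inl ⟨p, ⟨hp, hpg⟩, rfl⟩), by simp⟩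
  · intro e he
    rw [Finset.mem_filter] at he
    obtain ⟨heG, hpe⟩ := he
    rw [mem_starG] at heG
    rcases heG with ⟨q, ⟨hq, hqg⟩, rfl⟩ | ⟨q, hq, rfl⟩ | ⟨q, hq, rfl⟩ <;>
      simp only [Finset.mem_insert, Finset.mem_singleton] at hpe
    · rcases hpe with rfl | rfl
      · exact absurd rfl (mem_ne_ctr hp)
      · rfl
    · rcases hpe with rfl | rfl
      · exact absurd rfl (mem_ne_ctr hp)
      · exact absurd rfl (mem_ne_auxn hp q)
    · rcases hpe with rfl | rfl
      · exact absurd rfl (mem_ne_auxn hp q)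
      · exact absurd hq hpg

lemma filter_starG_ing {p : Node} (hp : p ∈ g) :
    (starG P g).filter (fun e => p ∈ e) = {({auxn P p, p} : Finset Node)} := by
  rw [Finset.eq_singleton_iff_unique_mem]
  constructor
  · rw [Finset.mem_filter]
    exact ⟨mem_starG.mpr (Or.inr (Or.inr ⟨p, hp, rfl⟩)), by simp⟩
  · intro e he
    rw [Finset.mem_filter] at he
    obtain ⟨heG, hpe⟩ := he
    rw [mem_starG] at heG
    rcases heG with ⟨q, ⟨hq, hqg⟩, rfl⟩ | ⟨q, hq, rfl⟩ | ⟨q, hq, rfl⟩ <;>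
      simp only [Finset.mem_insert, Finset.mem_singleton] at hpe
    · rcases hpe with rfl | rfl
      · exact absurd rfl (mem_ne_ctr (hg hp))
      · exact absurd hp hqg
    · rcases hpe with rfl | rfl
      · exact absurd rfl (mem_ne_ctr (hg hp))
      · exact absurd rfl (mem_ne_auxn (hg hp) q)
    · rcases hpe with rfl | rfl
      · exact absurd rfl (mem_ne_auxn (hg hp) q)
      · rfl

lemma filter_starG_auxn {p : Node} (hp : p ∈ g) :
    (starG P g).filter (fun e => auxn P p ∈ e) =
      {({ctr P, auxn P p} : Finset Node), ({auxn P p, p} : Finset Node)} := by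
  ext e
  rw [Finset.mem_filter, mem_starG]
  simp only [Finset.mem_insert, Finset.mem_singleton]
  constructor
  · rintro ⟨⟨q, ⟨hq, hqg⟩, rfl⟩ | ⟨q, hq, rfl⟩ | ⟨q, hq, rfl⟩, hpe⟩ <;>
      simp only [Finset.mem_insert, Finset.mem_singleton] at hpe
    · rcases hpe with h | h
      · exact absurd h.symm (ctr_ne_auxn P p)
      · exact absurd h.symm (mem_ne_auxn hq p)
    · rcases hpe with h | h
      · exact absurd h.symm (ctr_ne_auxn P p)
      · rw [auxn_inj h.symm]; exact Or.inl rfl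
    · rcases hpe with h | h
      · rw [auxn_inj h.symm]; exact Or.inr rfl
      · exact absurd h.symm (mem_ne_auxn (hg hq) p)
  · rintro (rfl | rfl)
    · exact ⟨Or.inr (Or.inl ⟨p, hp, rfl⟩), by simp⟩
    · exact ⟨Or.inr (Or.inr ⟨p, hp, rfl⟩), by simp⟩

lemma deg_starG_mem {p : Node} (hp : p ∈ P) : deg (starG P g) p = 1 := by
  by_cases hpg : p ∈ g
  · rw [deg, filter_starG_ing hg hpg, Finset.card_singleton]
  · rw [deg, filter_starG_notg hg hp hpg, Finset.card_singleton]

lemma deg_starG_auxn {p : Node} (hp : p ∈ g) : deg (starG P g) (auxn P p) = 2 := by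
  rw [deg, filter_starG_auxn hg hp]
  rw [Finset.card_insert_of_notMem, Finset.card_singleton]
  intro h
  rw [Finset.mem_singleton] at h
  have : ctr P ∈ ({auxn P p, p} : Finset Node) := by rw [← h]; simp
  simp only [Finset.mem_insert, Finset.mem_singleton] at this
  rcases this with h' | h'
  · exact (ctr_ne_auxn P p) h'
  · exact (mem_ne_ctr (hg hp)) h'.symm

include hP2

lemma deg_starG_ctr : 2 ≤ deg (starG P g) (ctr P) := by
  obtain ⟨p, hp, q, hq, hpq⟩ := Finset.one_lt_card.mp hP2
  set ep : Finset Node := if p ∈ g then {ctr P, auxn P p} else {ctr P, p} with hep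
  set eq' : Finset Node := if q ∈ g then {ctr P, auxn P q} else {ctr P, q} with heq
  have hepG : ep ∈ (starG P g).filter (fun e => ctr P ∈ e) := by
    rw [Finset.mem_filter, hep]
    by_cases h : p ∈ g <;> simp only [h, if_true, if_false, reduceIte]
    · exact ⟨mem_starG.mpr (Or.inr (Or.inl ⟨p, h, rfl⟩)), by simp⟩
    · exact ⟨mem_starG.mpr (Or.inl ⟨p, ⟨hp, h⟩, rfl⟩), by simp⟩
  have heqG : eq' ∈ (starG P g).filter (fun e => ctr P ∈ e) := by
    rw [Finset.mem_filter, heq]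
    by_cases h : q ∈ g <;> simp only [h, if_true, if_false, reduceIte]
    · exact ⟨mem_starG.mpr (Or.inr (Or.inl ⟨q, h, rfl⟩)), by simp⟩
    · exact ⟨mem_starG.mpr (Or.inl ⟨q, ⟨hq, h⟩, rfl⟩), by simp⟩
  have hne : ep ≠ eq' := by
    rw [hep, heq]
    by_cases h1 : p ∈ g <;> by_cases h2 : q ∈ g <;>
      simp only [h1, h2, if_true, if_false, reduceIte] <;> intro h
    · have : auxn P p ∈ ({ctr P, auxn P q} : Finset Node) := by rw [← h]; simp
      simp only [Finset.mem_insert, Finset.mem_singleton] at this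
      rcases this with h' | h'
      · exact (ctr_ne_auxn P p) h'.symm
      · exact hpq (auxn_inj h')
    · have : auxn P p ∈ ({ctr P, q} : Finset Node) := by rw [← h]; simp
      simp only [Finset.mem_insert, Finset.mem_singleton] at this
      rcases this with h' | h'
      · exact (ctr_ne_auxn P p) h'.symm
      · exact (mem_ne_auxn hq p) h'.symm
    · have : p ∈ ({ctr P, auxn P q} : Finset Node) := by rw [← h]; simp
      simp only [Finset.mem_insert, Finset.mem_singleton] at this
      rcases this with h' | h'
      · exact (mem_ne_ctr hp) h'
      · exact (mem_ne_auxn hp q) h'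
    · have : p ∈ ({ctr P, q} : Finset Node) := by rw [← h]; simp
      simp only [Finset.mem_insert, Finset.mem_singleton] at this
      rcases this with h' | h'
      · exact (mem_ne_ctr hp) h'
      · exact hpq h'
  calc 2 = ({ep, eq'} : Finset (Finset Node)).card := by
        rw [Finset.card_insert_of_notMem (by simpa using hne), Finset.card_singleton]
    _ ≤ _ := Finset.card_le_card (by
        intro e he
        simp only [Finset.mem_insert, Finset.mem_singleton] at he
        rcases he with rfl | rfl
        exacts [hepG, heqG])

lemma ports_starG : ports (starG P g) = P := by
  have hP : P.Nonempty := Finset.card_pos.mp (by omega)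
  ext v
  rw [ports, Finset.mem_filter, nodes_starG hg hP]
  simp only [Finset.mem_insert, Finset.mem_union, Finset.mem_image]
  constructor
  · rintro ⟨rfl | hv | ⟨p, hp, rfl⟩, hdeg⟩
    · exact absurd hdeg (by have := deg_starG_ctr hg hP2; omega)
    · exact hv
    · rw [deg_starG_auxn hg hp] at hdeg; omega
  · intro hv
    exact ⟨Or.inr (Or.inl hv), deg_starG_mem hg hv⟩

lemma internal_starG :
    internal (starG P g) = insert (ctr P) (g.image (auxn P)) := by
  have hP : P.Nonempty := Finset.card_pos.mp (by omega)
  ext v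
  rw [internal, Finset.mem_filter, nodes_starG hg hP]
  simp only [Finset.mem_insert, Finset.mem_union, Finset.mem_image]
  constructor
  · rintro ⟨rfl | hv | ⟨p, hp, rfl⟩, hdeg⟩
    · exact Or.inl rfl
    · exact absurd (deg_starG_mem hg hv) hdeg
    · exact Or.inr ⟨p, hp, rfl⟩
  · rintro (rfl | ⟨p, hp, rfl⟩)
    · exact ⟨Or.inl rfl, by have := deg_starG_ctr hg hP2; omega⟩
    · exact ⟨Or.inr (Or.inr ⟨p, hp, rfl⟩), by rw [deg_starG_auxn hg hp]; omega⟩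

end construction

private lemma sd_insert' {g : Finset Node} {q : Node} (hq : q ∉ g) : g ∆ {q} = insert q g := by
  ext x
  simp only [Finset.mem_symmDiff, Finset.mem_insert, Finset.mem_singleton]
  constructor
  · rintro (⟨h1, _⟩ | ⟨rfl, _⟩)
    exacts [Or.inr h1, Or.inl rfl]
  · rintro (rfl | hx)
    · exact Or.inr ⟨rfl, hq⟩
    · exact Or.inl ⟨hx, fun h => hq (h ▸ hx)⟩

private lemma sd_erase' {g : Finset Node} {q : Node} (hq : q ∈ g) : g ∆ {q} = g.erase q := by
  ext x
  simp only [Finset.mem_symmDiff, Finset.mem_erase, Finset.mem_singleton]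
  constructor
  · rintro (⟨h1, h2⟩ | ⟨rfl, h2⟩)
    · exact ⟨h2, h1⟩
    · exact absurd hq h2
  · rintro ⟨h1, h2⟩
    exact Or.inl ⟨h2, h1⟩

section construction2
variable {P g : Finset Node} (hg : g ⊆ P) (hP2 : 2 ≤ P.card)
include hg hP2

lemma kekule_W1 {q : Node} (hq : q ∈ P) (hqg : q ∉ g) :
    ∃ W, IsKekule (starG P g) W ∧ rest W P = insert q g := by
  set W : Graph := insert ({ctr P, q} : Finset Node)
    (g.image fun p => ({auxn P p, p} : Finset Node)) with hWdef
  have hmemW : ∀ e ∈ W, e = ({ctr P, q} : Finset Node) ∨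
      ∃ p ∈ g, e = ({auxn P p, p} : Finset Node) := by
    intro e he
    rw [hWdef, Finset.mem_insert, Finset.mem_image] at he
    rcases he with rfl | ⟨p, hp, rfl⟩
    · exact Or.inl rfl
    · exact Or.inr ⟨p, hp, rfl⟩
  have hWG : W ⊆ starG P g := by
    intro e he
    rcases hmemW e he with rfl | ⟨p, hp, rfl⟩
    · exact mem_starG.mpr (Or.inl ⟨q, ⟨hq, hqg⟩, rfl⟩)
    · exact mem_starG.mpr (Or.inr (Or.inr ⟨p, hp, rfl⟩))
  refine ⟨W, ⟨hWG, ?_⟩, ?_⟩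
  · intro v hv
    rw [internal_starG hg hP2] at hv
    simp only [Finset.mem_insert, Finset.mem_image] at hv
    rcases hv with rfl | ⟨p, hp, rfl⟩
    · rw [deg]
      have : W.filter (fun e => ctr P ∈ e) = {({ctr P, q} : Finset Node)} := by
        rw [Finset.eq_singleton_iff_unique_mem]
        refine ⟨Finset.mem_filter.mpr ⟨Finset.mem_insert_self _ _, by simp⟩, ?_⟩
        intro e he
        rw [Finset.mem_filter] at he
        obtain ⟨heW, hce⟩ := he
        rcases hmemW e heW with rfl | ⟨p, hp, rfl⟩
        · rfl
        · simp only [Finset.mem_insert, Finset.mem_singleton] at hce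
          rcases hce with h | h
          · exact absurd h (ctr_ne_auxn P p)
          · exact absurd h.symm (mem_ne_ctr (hg hp))
      rw [this, Finset.card_singleton]
    · rw [deg]
      have : W.filter (fun e => auxn P p ∈ e) = {({auxn P p, p} : Finset Node)} := by
        rw [Finset.eq_singleton_iff_unique_mem]
        constructor
        · refine Finset.mem_filter.mpr ⟨?_, by simp⟩
          rw [hWdef, Finset.mem_insert, Finset.mem_image]
          exact Or.inr ⟨p, hp, rfl⟩
        · intro e he
          rw [Finset.mem_filter] at he
          obtain ⟨heW, hce⟩ := he
          rcases hmemW e heW with rfl | ⟨p', hp', rfl⟩ <;>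
            simp only [Finset.mem_insert, Finset.mem_singleton] at hce
          · rcases hce with h | h
            · exact absurd h.symm (ctr_ne_auxn P p)
            · exact absurd h.symm (mem_ne_auxn hq p)
          · rcases hce with h | h
            · rw [auxn_inj h]
            · exact absurd h.symm (mem_ne_auxn (hg hp') p)
      rw [this, Finset.card_singleton]
  · ext v
    rw [rest, Finset.mem_inter, mem_nodes]
    simp only [Finset.mem_insert]
    constructor
    · rintro ⟨hvP, e, heW, hve⟩
      rcases hmemW e heW with rfl | ⟨p, hp, rfl⟩ <;>
        simp only [Finset.mem_insert, Finset.mem_singleton] at hve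
      · rcases hve with rfl | rfl
        · exact absurd rfl (mem_ne_ctr hvP)
        · exact Or.inl rfl
      · rcases hve with rfl | rfl
        · exact absurd rfl (mem_ne_auxn hvP p)
        · exact Or.inr hp
    · rintro (rfl | hvg)
      · exact ⟨hq, ({ctr P, v} : Finset Node), Finset.mem_insert_self _ _, by simp⟩
      · refine ⟨hg hvg, ({auxn P v, v} : Finset Node), ?_, by simp⟩
        rw [hWdef, Finset.mem_insert, Finset.mem_image]
        exact Or.inr ⟨v, hvg, rfl⟩

lemma kekule_W2 {q : Node} (hq : q ∈ g) :
    ∃ W, IsKekule (starG P g) W ∧ rest W P = g.erase q := by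
  set W : Graph := insert ({ctr P, auxn P q} : Finset Node)
    ((g.erase q).image fun p => ({auxn P p, p} : Finset Node)) with hWdef
  have hmemW : ∀ e ∈ W, e = ({ctr P, auxn P q} : Finset Node) ∨
      ∃ p, (p ∈ g ∧ p ≠ q) ∧ e = ({auxn P p, p} : Finset Node) := by
    intro e he
    rw [hWdef, Finset.mem_insert, Finset.mem_image] at he
    rcases he with rfl | ⟨p, hp, rfl⟩
    · exact Or.inl rfl
    · rw [Finset.mem_erase] at hp
      exact Or.inr ⟨p, ⟨hp.2, hp.1⟩, rfl⟩
  have hWG : W ⊆ starG P g := by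
    intro e he
    rcases hmemW e he with rfl | ⟨p, ⟨hp, _⟩, rfl⟩
    · exact mem_starG.mpr (Or.inr (Or.inl ⟨q, hq, rfl⟩))
    · exact mem_starG.mpr (Or.inr (Or.inr ⟨p, hp, rfl⟩))
  refine ⟨W, ⟨hWG, ?_⟩, ?_⟩
  · intro v hv
    rw [internal_starG hg hP2] at hv
    simp only [Finset.mem_insert, Finset.mem_image] at hv
    rcases hv with rfl | ⟨p, hp, rfl⟩
    · rw [deg]
      have : W.filter (fun e => ctr P ∈ e) = {({ctr P, auxn P q} : Finset Node)} := by
        rw [Finset.eq_singleton_iff_unique_mem]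
        refine ⟨Finset.mem_filter.mpr ⟨Finset.mem_insert_self _ _, by simp⟩, ?_⟩
        intro e he
        rw [Finset.mem_filter] at he
        obtain ⟨heW, hce⟩ := he
        rcases hmemW e heW with rfl | ⟨p, ⟨hp, _⟩, rfl⟩
        · rfl
        · simp only [Finset.mem_insert, Finset.mem_singleton] at hce
          rcases hce with h | h
          · exact absurd h (ctr_ne_auxn P p)
          · exact absurd h.symm (mem_ne_ctr (hg hp))
      rw [this, Finset.card_singleton]
    · rw [deg]
      by_cases hpq : p = q
      · subst hpq
        have : W.filter (fun e => auxn P p ∈ e) = {({ctr P, auxn P p} : Finset Node)} := by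
          rw [Finset.eq_singleton_iff_unique_mem]
          refine ⟨Finset.mem_filter.mpr ⟨Finset.mem_insert_self _ _, by simp⟩, ?_⟩
          intro e he
          rw [Finset.mem_filter] at he
          obtain ⟨heW, hce⟩ := he
          rcases hmemW e heW with rfl | ⟨p', ⟨hp', hp'q⟩, rfl⟩
          · rfl
          · simp only [Finset.mem_insert, Finset.mem_singleton] at hce
            rcases hce with h | h
            · exact absurd (auxn_inj h) (Ne.symm hp'q)
            · exact absurd h.symm (mem_ne_auxn (hg hp') p)
        rw [this, Finset.card_singleton]
      · have : W.filter (fun e => auxn P p ∈ e) = {({auxn P p, p} : Finset Node)} := by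
          rw [Finset.eq_singleton_iff_unique_mem]
          constructor
          · refine Finset.mem_filter.mpr ⟨?_, by simp⟩
            rw [hWdef, Finset.mem_insert, Finset.mem_image]
            exact Or.inr ⟨p, Finset.mem_erase.mpr ⟨hpq, hp⟩, rfl⟩
          · intro e he
            rw [Finset.mem_filter] at he
            obtain ⟨heW, hce⟩ := he
            rcases hmemW e heW with rfl | ⟨p', ⟨hp', _⟩, rfl⟩ <;>
              simp only [Finset.mem_insert, Finset.mem_singleton] at hce
            · rcases hce with h | h
              · exact absurd h.symm (ctr_ne_auxn P p)
              · exact absurd (auxn_inj h) hpq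
            · rcases hce with h | h
              · rw [auxn_inj h]
              · exact absurd h.symm (mem_ne_auxn (hg hp') p)
        rw [this, Finset.card_singleton]
  · ext v
    rw [rest, Finset.mem_inter, mem_nodes, Finset.mem_erase]
    constructor
    · rintro ⟨hvP, e, heW, hve⟩
      rcases hmemW e heW with rfl | ⟨p, ⟨hp, hpq⟩, rfl⟩ <;>
        simp only [Finset.mem_insert, Finset.mem_singleton] at hve
      · rcases hve with rfl | rfl
        · exact absurd rfl (mem_ne_ctr hvP)
        · exact absurd rfl (mem_ne_auxn hvP q)
      · rcases hve with rfl | rfl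
        · exact absurd rfl (mem_ne_auxn hvP p)
        · exact ⟨hpq, hp⟩
    · rintro ⟨hvq, hvg⟩
      refine ⟨hg hvg, ({auxn P v, v} : Finset Node), ?_, by simp⟩
      rw [hWdef, Finset.mem_insert, Finset.mem_image]
      exact Or.inr ⟨v, Finset.mem_erase.mpr ⟨hvq, hvg⟩, rfl⟩

lemma KP_starG_sub {k : Finset Node} (hk : k ∈ KP (starG P g)) :
    ∃ q ∈ P, k = g ∆ {q} := by
  obtain ⟨W, ⟨hWG, hdegs⟩, hrest⟩ := hk
  rw [ports_starG hg hP2] at hrest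
  have hdegc : deg W (ctr P) = 1 := by
    apply hdegs
    rw [internal_starG hg hP2]
    exact Finset.mem_insert_self _ _
  have hdegx : ∀ p ∈ g, deg W (auxn P p) = 1 := by
    intro p hp
    apply hdegs
    rw [internal_starG hg hP2]
    simp only [Finset.mem_insert, Finset.mem_image]
    exact Or.inr ⟨p, hp, rfl⟩
  rw [deg] at hdegc
  obtain ⟨e, he⟩ := Finset.card_eq_one.mp hdegc
  have heW : e ∈ W ∧ ctr P ∈ e := by
    have := he ▸ Finset.mem_singleton_self e
    exact Finset.mem_filter.mp this
  have huniq : ∀ f ∈ W, ctr P ∈ f → f = e := by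
    intro f hf hcf
    have : f ∈ W.filter (fun e => ctr P ∈ e) := Finset.mem_filter.mpr ⟨hf, hcf⟩
    rw [he, Finset.mem_singleton] at this
    exact this
  -- auxn edges
  have hxedge : ∀ p ∈ g, (({ctr P, auxn P p} : Finset Node) ∈ W ∧ ({auxn P p, p} : Finset Node) ∉ W)
      ∨ (({auxn P p, p} : Finset Node) ∈ W ∧ ({ctr P, auxn P p} : Finset Node) ∉ W) := by
    intro p hp
    have h1 := hdegx p hp
    rw [deg] at h1
    obtain ⟨f, hf⟩ := Finset.card_eq_one.mp h1
    have hfW : f ∈ W ∧ auxn P p ∈ f := by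
      have := hf ▸ Finset.mem_singleton_self f
      exact Finset.mem_filter.mp this
    have huniqf : ∀ f' ∈ W, auxn P p ∈ f' → f' = f := by
      intro f' hf' hcf
      have : f' ∈ W.filter (fun e => auxn P p ∈ e) := Finset.mem_filter.mpr ⟨hf', hcf⟩
      rw [hf, Finset.mem_singleton] at this
      exact this
    have hfG := mem_starG.mp (hWG hfW.1)
    have hfshape : f = ({ctr P, auxn P p} : Finset Node) ∨ f = ({auxn P p, p} : Finset Node) := by
      rcases hfG with ⟨q, ⟨hq, _⟩, rfl⟩ | ⟨q, hq, rfl⟩ | ⟨q, hq, rfl⟩ <;>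
        have hxf := hfW.2 <;>
        simp only [Finset.mem_insert, Finset.mem_singleton] at hxf
      · rcases hxf with h | h
        · exact absurd h.symm (ctr_ne_auxn P p)
        · exact absurd h.symm (mem_ne_auxn hq p)
      · rcases hxf with h | h
        · exact absurd h.symm (ctr_ne_auxn P p)
        · rw [auxn_inj h.symm]; exact Or.inl rfl
      · rcases hxf with h | h
        · rw [auxn_inj h.symm]; exact Or.inr rfl
        · exact absurd h.symm (mem_ne_auxn (hg hq) p)
    rcases hfshape with rfl | rfl
    · refine Or.inl ⟨hfW.1, fun hcon => ?_⟩
      have := huniqf _ hcon (by simp)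
      have h2 : ctr P ∈ ({auxn P p, p} : Finset Node) := by rw [this]; simp
      simp only [Finset.mem_insert, Finset.mem_singleton] at h2
      rcases h2 with h | h
      · exact (ctr_ne_auxn P p) h
      · exact (mem_ne_ctr (hg hp)) h.symm
    · refine Or.inr ⟨hfW.1, fun hcon => ?_⟩
      have := huniqf _ hcon (by simp)
      have h2 : ctr P ∈ ({auxn P p, p} : Finset Node) := by rw [← this]; simp
      simp only [Finset.mem_insert, Finset.mem_singleton] at h2
      rcases h2 with h | h
      · exact (ctr_ne_auxn P p) h
      · exact (mem_ne_ctr (hg hp)) h.symm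
  have heG := mem_starG.mp (hWG heW.1)
  rcases heG with ⟨q, ⟨hq, hqg⟩, rfl⟩ | ⟨q, hq, rfl⟩ | ⟨q, hq, rfl⟩
  · -- e = {ctr, q}, q ∈ P \ g
    refine ⟨q, hq, ?_⟩
    rw [sd_insert' hqg, ← hrest]
    ext v
    rw [rest, Finset.mem_inter, mem_nodes, Finset.mem_insert]
    constructor
    · rintro ⟨hvP, f, hfW, hvf⟩
      rcases mem_starG.mp (hWG hfW) with ⟨p, ⟨hp, hpg⟩, rfl⟩ | ⟨p, hp, rfl⟩ | ⟨p, hp, rfl⟩ <;>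
        simp only [Finset.mem_insert, Finset.mem_singleton] at hvf
      · rcases hvf with rfl | rfl
        · exact absurd rfl (mem_ne_ctr hvP)
        · have := huniq _ hfW (by simp)
          have h2 : v ∈ ({ctr P, q} : Finset Node) := by rw [← this]; simp
          simp only [Finset.mem_insert, Finset.mem_singleton] at h2
          rcases h2 with h | h
          · exact absurd h (mem_ne_ctr hvP)
          · exact Or.inl h
      · rcases hvf with rfl | rfl
        · exact absurd rfl (mem_ne_ctr hvP)
        · exact absurd rfl (mem_ne_auxn hvP p)
      · rcases hvf with rfl | rfl
        · exact absurd rfl (mem_ne_auxn hvP p)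
        · exact Or.inr hp
    · rintro (rfl | hvg)
      · exact ⟨hq, ({ctr P, v} : Finset Node), heW.1, by simp⟩
      · rcases hxedge v hvg with ⟨h1, h2⟩ | ⟨h1, h2⟩
        · exfalso
          have := huniq _ h1 (by simp)
          have h3 : auxn P v ∈ ({ctr P, q} : Finset Node) := by rw [← this]; simp
          simp only [Finset.mem_insert, Finset.mem_singleton] at h3
          rcases h3 with h | h
          · exact (ctr_ne_auxn P v) h.symm
          · exact (mem_ne_auxn hq v) h.symm
        · exact ⟨hg hvg, ({auxn P v, v} : Finset Node), h1, by simp⟩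
  · -- e = {ctr, auxn q}, q ∈ g
    refine ⟨q, hg hq, ?_⟩
    rw [sd_erase' hq, ← hrest]
    ext v
    rw [rest, Finset.mem_inter, mem_nodes, Finset.mem_erase]
    constructor
    · rintro ⟨hvP, f, hfW, hvf⟩
      rcases mem_starG.mp (hWG hfW) with ⟨p, ⟨hp, hpg⟩, rfl⟩ | ⟨p, hp, rfl⟩ | ⟨p, hp, rfl⟩ <;>
        simp only [Finset.mem_insert, Finset.mem_singleton] at hvf
      · rcases hvf with rfl | rfl
        · exact absurd rfl (mem_ne_ctr hvP)
        · exfalso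
          have := huniq _ hfW (by simp)
          have h2 : v ∈ ({ctr P, auxn P q} : Finset Node) := by rw [← this]; simp
          simp only [Finset.mem_insert, Finset.mem_singleton] at h2
          rcases h2 with h | h
          · exact (mem_ne_ctr hvP) h
          · exact (mem_ne_auxn hvP q) h
      · rcases hvf with rfl | rfl
        · exact absurd rfl (mem_ne_ctr hvP)
        · exact absurd rfl (mem_ne_auxn hvP p)
      · rcases hvf with rfl | rfl
        · exact absurd rfl (mem_ne_auxn hvP p)
        · refine ⟨?_, hp⟩
          rintro rfl
          rcases hxedge v hp with ⟨h1, h2⟩ | ⟨h1, h2⟩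
          · exact h2 hfW
          · exact h2 heW.1
    · rintro ⟨hvq, hvg⟩
      rcases hxedge v hvg with ⟨h1, h2⟩ | ⟨h1, h2⟩
      · exfalso
        have := huniq _ h1 (by simp)
        have h3 : auxn P v ∈ ({ctr P, auxn P q} : Finset Node) := by rw [← this]; simp
        simp only [Finset.mem_insert, Finset.mem_singleton] at h3
        rcases h3 with h | h
        · exact (ctr_ne_auxn P v) h.symm
        · exact hvq (auxn_inj h)
      · exact ⟨hg hvg, ({auxn P v, v} : Finset Node), h1, by simp⟩
  · -- e = {auxn q, q}: impossible since ctr ∈ e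
    exfalso
    have h2 := heW.2
    simp only [Finset.mem_insert, Finset.mem_singleton] at h2
    rcases h2 with h | h
    · exact (ctr_ne_auxn P q) h
    · exact (mem_ne_ctr (hg hq)) h.symm

lemma KP_starG : KP (starG P g) = {k | ∃ q ∈ P, k = g ∆ {q}} := by
  ext k
  constructor
  · intro hk
    exact KP_starG_sub hg hP2 hk
  · rintro ⟨q, hq, rfl⟩
    by_cases hqg : q ∈ g
    · obtain ⟨W, hW, hr⟩ := kekule_W2 hg hP2 hqg
      refine ⟨W, hW, ?_⟩
      rw [ports_starG hg hP2, hr, sd_erase' hqg]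
    · obtain ⟨W, hW, hr⟩ := kekule_W1 hg hP2 hq hqg
      refine ⟨W, hW, ?_⟩
      rw [ports_starG hg hP2, hr, sd_insert' hqg]

end construction2

/-- classification of flexible Kekulé cells of diameter 2 when
`#P ≠ 3`: they are exactly the translates of `K₁ = { {p} | p ∈ P }`. -/
theorem statement9 (P : Finset Node) (hP : P.card ≠ 3)
    (K : Set (Finset Node)) (hKP : ∀ k ∈ K, k ⊆ P)
    (hflex : ∀ p ∈ P, Flexible K p)
    (hdiam : HamDiamEq K 2) :
    IsKekuleCell P K ↔
      ∃ g : Finset Node, g ⊆ P ∧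
        K = (fun k => g ∆ k) '' {k : Finset Node | ∃ p ∈ P, k = {p}} := by
  constructor
  · rintro ⟨G, hGgraph, hports, hKPG⟩
    apply abstract_classify P hP K hKP hflex hdiam
    intro k hk k' hk'
    rw [← hKPG] at hk hk'
    obtain ⟨W, hW, hr⟩ := hk
    obtain ⟨W', hW', hr'⟩ := hk'
    have p1 := parity G W hGgraph hW
    have p2 := parity G W' hGgraph hW'
    rw [hr] at p1; rw [hr'] at p2
    have hc := card_sd_add k k'
    rw [Nat.even_iff]
    show (k ∆ k').card % 2 = 0
    omega
  · rintro ⟨g, hgP, hKeq⟩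
    have hP2 : 2 ≤ P.card := by
      obtain ⟨⟨k, hk, k', hk', hd⟩, _⟩ := hdiam
      rw [hKeq] at hk hk'
      obtain ⟨s, ⟨p, hp, rfl⟩, rfl⟩ := hk
      obtain ⟨s', ⟨q, hq, rfl⟩, rfl⟩ := hk'
      have hcan : hdist (g ∆ {p}) (g ∆ {q}) = ({p} ∆ ({q} : Finset Node)).card := by
        show ((g ∆ {p}) ∆ (g ∆ {q})).card = _
        rw [sd_cancel_left]
      rw [hcan] at hd
      have hpq : p ≠ q := by
        rintro rfl
        rw [sd_eq_iff.mpr rfl] at hd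
        simp at hd
      exact Finset.one_lt_card.mpr ⟨p, hp, q, hq, hpq⟩
    refine ⟨starG P g, isGraph_starG hgP, ports_starG hgP hP2, ?_⟩
    rw [KP_starG hgP hP2, hKeq]
    ext k
    simp only [Set.mem_setOf_eq, Set.mem_image]
    constructor
    · rintro ⟨q, hq, rfl⟩
      exact ⟨{q}, ⟨q, hq, rfl⟩, rfl⟩
    · rintro ⟨s, ⟨q, hq, rfl⟩, rfl⟩
      exact ⟨q, hq, rfl⟩
end Kekule
end

section
/- Let G be a graph with port set P = pG and signature ε = sG, and let W be a semi-Kekulé state of G. Then the cardinality of W|P is congruent to ε modulo 2. -/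
open scoped symmDiff

namespace Kekule

/-- For a semi-Kekulé state `W` of `G`, the cardinality of
`W|P` is congruent to the signature of `G` modulo 2. -/
theorem statement11 (G : Graph) (hG : IsGraph G)
    (W : Graph) (hW : IsSemiKekule G W) :
    (rest W (ports G)).card % 2 = sig G := by
  obtain ⟨hWG, hint⟩ := hW
  have hnodes : nodes W ⊆ nodes G := by
    intro v hv
    simp only [nodes, Finset.mem_biUnion, id] at hv ⊢
    obtain ⟨e, he, hve⟩ := hv
    exact ⟨e, hWG he, hve⟩
  have hintW : internal G ⊆ nodes W := by
    intro v hv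
    have h := hint v hv
    by_contra hn
    have hz : deg W v = 0 := by
      rw [deg, Finset.card_eq_zero, Finset.filter_eq_empty_iff]
      intro e he hve
      exact hn (Finset.mem_biUnion.mpr ⟨e, he, hve⟩)
    simp [hz] at h
  have hdegle : ∀ v, deg W v ≤ deg G v := fun v =>
    Finset.card_le_card (Finset.filter_subset_filter _ hWG)
  have hportdeg : ∀ v ∈ rest W (ports G), deg W v = 1 := by
    intro v hv
    rw [rest, Finset.mem_inter] at hv
    obtain ⟨hp, hw⟩ := hv
    have h1 : deg G v = 1 := (Finset.mem_filter.mp hp).2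
    have hle := hdegle v
    have hpos : 0 < deg W v := by
      rw [deg, Finset.card_pos]
      obtain ⟨e, he, hve⟩ := Finset.mem_biUnion.mp hw
      exact ⟨e, Finset.mem_filter.mpr ⟨he, hve⟩⟩
    omega
  have hdisj : Disjoint (rest W (ports G)) (internal G) := by
    apply Finset.disjoint_left.mpr
    intro v hv hvi
    have hp := (Finset.mem_filter.mp (Finset.mem_inter.mp hv).1).2
    exact (Finset.mem_filter.mp hvi).2 hp
  have hpart : nodes W = rest W (ports G) ∪ internal G := by
    apply Finset.Subset.antisymm
    · intro v hv
      rcases em (deg G v = 1) with h1 | h1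
      · exact Finset.mem_union_left _ (Finset.mem_inter.mpr
          ⟨Finset.mem_filter.mpr ⟨hnodes hv, h1⟩, hv⟩)
      · exact Finset.mem_union_right _ (Finset.mem_filter.mpr ⟨hnodes hv, h1⟩)
    · intro v hv
      rcases Finset.mem_union.mp hv with h | h
      · exact (Finset.mem_inter.mp h).2
      · exact hintW h
  have hhand : ∑ v ∈ nodes W, deg W v = 2 * W.card := by
    have hsw : ∑ v ∈ nodes W, deg W v
        = ∑ e ∈ W, ((nodes W).filter (fun v => v ∈ e)).card := by
      simp only [deg, Finset.card_filter]
      exact Finset.sum_comm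
    rw [hsw]
    have heq : ∀ e ∈ W, ((nodes W).filter (fun v => v ∈ e)).card = 2 := by
      intro e he
      have hsub : e ⊆ nodes W := fun v hv => Finset.mem_biUnion.mpr ⟨e, he, hv⟩
      have hfe : (nodes W).filter (fun v => v ∈ e) = e := by
        apply Finset.Subset.antisymm
        · intro v hv; exact (Finset.mem_filter.mp hv).2
        · intro v hv; exact Finset.mem_filter.mpr ⟨hsub hv, hv⟩
      rw [hfe]
      exact hG e (hWG he)
    rw [Finset.sum_congr rfl heq]
    simp [mul_comm]
  have key : ((rest W (ports G)).card : ZMod 2) = ((internal G).card : ZMod 2) := by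
    have h0 : (∑ v ∈ nodes W, (deg W v : ZMod 2)) = 0 := by
      rw [← Nat.cast_sum, hhand, Nat.cast_mul]
      have h2 : ((2 : ℕ) : ZMod 2) = 0 := by decide
      rw [h2, zero_mul]
    rw [hpart, Finset.sum_union hdisj] at h0
    have h1 : ∑ v ∈ rest W (ports G), (deg W v : ZMod 2)
        = ((rest W (ports G)).card : ZMod 2) := by
      rw [Finset.sum_congr rfl (fun v hv => by rw [hportdeg v hv, Nat.cast_one])]
      simp
    have h2 : ∑ v ∈ internal G, (deg W v : ZMod 2)
        = ((internal G).card : ZMod 2) := by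
      have hone : ∀ v ∈ internal G, (deg W v : ZMod 2) = 1 := by
        intro v hv
        have h := hint v hv
        calc (deg W v : ZMod 2) = ((deg W v % 2 : ℕ) : ZMod 2) :=
              (ZMod.natCast_mod _ _).symm
          _ = 1 := by rw [h]; norm_num
      rw [Finset.sum_congr rfl hone]
      simp
    rw [h1, h2] at h0
    have := eq_neg_of_add_eq_zero_left h0
    rwa [CharTwo.neg_eq] at this
  rw [sig]
  exact (ZMod.natCast_eq_natCast_iff _ _ _).mp key
end Kekule
end

section
/- Let G be a connected graph with port set P = pG and signature ε = sG, and let g ⊆ P be a port assignment whose cardinality is congruent to ε modulo 2. Then G has a semi-Kekulé state W with W|P = g. -/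
open scoped symmDiff

namespace Kekule

instance : Std.Commutative (α := Graph) (· ∆ ·) := ⟨symmDiff_comm⟩
instance : Std.Associative (α := Graph) (· ∆ ·) := ⟨symmDiff_assoc⟩

lemma deg_parity_symmDiff (A B : Graph) (v : Node) :
    deg (A ∆ B) v % 2 = (deg A v + deg B v) % 2 := by
  classical
  unfold deg
  have hf : (A ∆ B).filter (fun e => v ∈ e) =
      (A.filter (fun e => v ∈ e)) ∆ (B.filter (fun e => v ∈ e)) := by
    ext e
    simp [Finset.mem_symmDiff, Finset.mem_filter]
    tauto
  rw [hf]
  set X := A.filter (fun e => v ∈ e)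
  set Y := B.filter (fun e => v ∈ e)
  have h1 : X ∆ Y = (X \ Y) ∪ (Y \ X) := rfl
  have hd : Disjoint (X \ Y) (Y \ X) := by
    rw [Finset.disjoint_left]
    intro a ha hb
    exact (Finset.mem_sdiff.1 hb).2 (Finset.mem_sdiff.1 ha).1
  have h2 : (X ∆ Y).card = (X \ Y).card + (Y \ X).card := by
    rw [h1, Finset.card_union_of_disjoint hd]
  have h3 : (X \ Y).card + (X ∩ Y).card = X.card := Finset.card_sdiff_add_card_inter X Y
  have h4 : (Y \ X).card + (Y ∩ X).card = Y.card := Finset.card_sdiff_add_card_inter Y X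
  have h5 : (X ∩ Y).card = (Y ∩ X).card := by rw [Finset.inter_comm]
  omega

lemma deg_empty' (v : Node) : deg (∅ : Graph) v = 0 := by simp [deg]

lemma deg_singleton' (e : Finset Node) (v : Node) :
    deg ({e} : Graph) v = if v ∈ e then 1 else 0 := by
  simp [deg, Finset.filter_singleton]
  split <;> simp

lemma mem_nodes_iff_deg (W : Graph) (v : Node) : v ∈ nodes W ↔ 0 < deg W v := by
  simp [nodes, deg, Finset.card_pos, Finset.filter_nonempty_iff, Finset.mem_biUnion]

lemma deg_mono {W G : Graph} (h : W ⊆ G) (v : Node) : deg W v ≤ deg G v :=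
  Finset.card_le_card (Finset.filter_subset_filter _ h)

lemma walk_graph (G : Graph) (hG : IsGraph G) (f : ℕ → Node) :
    ∀ n, (∀ i < n, ({f i, f (i+1)} : Finset Node) ∈ G) →
    ∃ W, W ⊆ G ∧ ∀ v, deg W v % 2 =
      ((if v = f 0 then 1 else 0) + (if v = f n then 1 else 0)) % 2 := by
  intro n
  induction n with
  | zero =>
    intro _
    refine ⟨∅, Finset.empty_subset _, fun v => ?_⟩
    by_cases h : v = f 0 <;> simp [deg_empty', h]
  | succ n ih =>
    intro h
    obtain ⟨W, hWsub, hWdeg⟩ := ih (fun i hi => h i (by omega))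
    have he : ({f n, f (n+1)} : Finset Node) ∈ G := h n (by omega)
    have hne : f n ≠ f (n+1) := by
      intro hEq
      have := hG _ he
      rw [hEq] at this
      simp at this
    refine ⟨W ∆ {({f n, f (n+1)} : Finset Node)}, ?_, ?_⟩
    · intro e hee
      rcases Finset.mem_symmDiff.1 hee with ⟨h1, _⟩ | ⟨h1, _⟩
      · exact hWsub h1
      · rw [Finset.mem_singleton.1 h1]; exact he
    · intro v
      rw [deg_parity_symmDiff, deg_singleton']
      have h1 := hWdeg v
      have hm : (if v ∈ ({f n, f (n+1)} : Finset Node) then (1:ℕ) else 0) =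
          (if v = f n then 1 else 0) + (if v = f (n+1) then 1 else 0) := by
        by_cases hA : v = f n
        · subst hA
          simp [hne]
        · by_cases hB : v = f (n+1)
          · subst hB
            simp [Finset.mem_insert, hA]
          · simp [Finset.mem_insert, Finset.mem_singleton, hA, hB]
      rw [hm]
      split_ifs at h1 ⊢ <;> omega

lemma pair_graph (G : Graph) (hG : IsGraph G) (hconn : Connected G) (r : Node)
    (hr : r ∈ nodes G) (t : Node) (ht : t ∈ nodes G) :
    ∃ W, W ⊆ G ∧ ∀ v, deg W v % 2 =
      ((if v = t then 1 else 0) + (if v = r then 1 else 0)) % 2 := by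
  by_cases htr : t = r
  · refine ⟨∅, Finset.empty_subset _, fun v => ?_⟩
    subst htr
    by_cases h : v = t <;> simp [deg_empty', h]
  · obtain ⟨n, f, hf0, hfn, hstep⟩ := hconn.2 t ht r hr htr
    obtain ⟨W, h1, h2⟩ := walk_graph G hG f n hstep
    exact ⟨W, h1, fun v => by rw [h2 v, hf0, hfn]⟩

lemma exists_xor (G : Graph) (F : Node → Graph) (hF : ∀ t, F t ⊆ G) :
    ∀ T : Finset Node, ∃ W : Graph, W ⊆ G ∧
      ∀ v, deg W v % 2 = (∑ t ∈ T, deg (F t) v) % 2 := by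
  classical
  intro T
  induction T using Finset.induction with
  | empty => exact ⟨∅, Finset.empty_subset _, fun v => by simp [deg_empty']⟩
  | @insert x s hx ih =>
    obtain ⟨W, hWsub, hWdeg⟩ := ih
    refine ⟨F x ∆ W, ?_, ?_⟩
    · intro e hee
      rcases Finset.mem_symmDiff.1 hee with ⟨h1, _⟩ | ⟨h1, _⟩
      · exact hF x h1
      · exact hWsub h1
    · intro v
      rw [deg_parity_symmDiff, Finset.sum_insert hx]
      have := hWdeg v
      omega


/-- A connected graph has a semi-Kekulé state realizing any
port assignment of the right parity. -/
theorem statement12 (G : Graph) (hG : IsGraph G) (hconn : Connected G)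
    (g : Finset Node) (hg : g ⊆ ports G) (hpar : g.card % 2 = sig G) :
    ∃ W : Graph, IsSemiKekule G W ∧ rest W (ports G) = g := by
  classical
  obtain ⟨e0, he0⟩ := hconn.1
  have he0card := hG e0 he0
  obtain ⟨r, hr⟩ : e0.Nonempty := Finset.card_pos.mp (by omega)
  have hrG : r ∈ nodes G := Finset.mem_biUnion.mpr ⟨e0, he0, hr⟩
  set T : Finset Node := internal G ∪ g with hT
  have hTsub : ∀ t ∈ T, t ∈ nodes G := by
    intro t htT
    rcases Finset.mem_union.1 htT with h | h
    · exact (Finset.mem_filter.1 h).1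
    · exact (Finset.mem_filter.1 (hg h)).1
  have hdisj : Disjoint (internal G) g := by
    rw [Finset.disjoint_left]
    intro a ha hag
    have h1 := (Finset.mem_filter.1 ha).2
    exact h1 (Finset.mem_filter.1 (hg hag)).2
  have hTcard : T.card % 2 = 0 := by
    have := Finset.card_union_of_disjoint hdisj
    rw [hT, this]
    have hs : sig G = (internal G).card % 2 := rfl
    omega
  have hch : ∀ t : Node, ∃ W, W ⊆ G ∧ (t ∈ nodes G → ∀ v, deg W v % 2 =
      ((if v = t then 1 else 0) + (if v = r then 1 else 0)) % 2) := by
    intro t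
    by_cases ht : t ∈ nodes G
    · obtain ⟨W, h1, h2⟩ := pair_graph G hG hconn r hrG t ht
      exact ⟨W, h1, fun _ => h2⟩
    · exact ⟨∅, Finset.empty_subset _, fun h => absurd h ht⟩
  choose F hFsub hFdeg using hch
  obtain ⟨W, hWsub, hWdeg0⟩ := exists_xor G F hFsub T
  have hdegW : ∀ v, deg W v % 2 = if v ∈ T then 1 else 0 := by
    intro v
    rw [hWdeg0 v, Finset.sum_nat_mod]
    rw [Finset.sum_congr rfl (fun t htT => hFdeg t (hTsub t htT) v)]
    rw [← Finset.sum_nat_mod, Finset.sum_add_distrib, Finset.sum_ite_eq,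
      Finset.sum_const, smul_eq_mul]
    split_ifs <;> omega
  refine ⟨W, ⟨hWsub, fun v hv => ?_⟩, ?_⟩
  · rw [hdegW v, if_pos (Finset.mem_union.2 (Or.inl hv))]
  · ext p
    simp only [rest, Finset.mem_inter]
    constructor
    · rintro ⟨hpP, hpW⟩
      by_contra hpg
      have hpT : p ∉ T := by
        intro hpT
        rcases Finset.mem_union.1 hpT with h | h
        · exact (Finset.mem_filter.1 h).2 (Finset.mem_filter.1 hpP).2
        · exact hpg h
      have h1 : deg W p % 2 = 0 := by rw [hdegW p, if_neg hpT]
      have h2 : 0 < deg W p := (mem_nodes_iff_deg W p).1 hpW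
      have h3 : deg W p ≤ deg G p := deg_mono hWsub p
      have h4 : deg G p = 1 := (Finset.mem_filter.1 hpP).2
      omega
    · intro hpg
      have hpP : p ∈ ports G := hg hpg
      refine ⟨hpP, ?_⟩
      rw [mem_nodes_iff_deg]
      have h1 : deg W p % 2 = 1 := by
        rw [hdegW p, if_pos (Finset.mem_union.2 (Or.inr hpg))]
      omega

end Kekule
end

section
/- Let G be a graph with n ≥ 2 nodes. For each node v of G let p_v be a new node (the p_v pairwise distinct and not among the nodes of G), and let G' = G ∪ { {v, p_v} : v a node of G }. If G' is omniconjugated, then every two distinct nodes of G are joined by an edge of G, i.e. G is a complete graph on its node set. -/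
open scoped symmDiff

namespace Kekule

/-- If attaching a new port to every node of `G` yields an
omniconjugated graph, then `G` is complete. -/
theorem statement16 (G : Graph) (hG : IsGraph G) (hn : 2 ≤ (nodes G).card)
    (pmap : Node → Node)
    (hinj : Set.InjOn pmap (nodes G))
    (hnew : ∀ v ∈ nodes G, pmap v ∉ nodes G)
    (G' : Graph)
    (hG' : G' = G ∪ (nodes G).image (fun v => ({v, pmap v} : Finset Node)))
    (homni : Omniconjugated G') :
    ∀ u ∈ nodes G, ∀ v ∈ nodes G, u ≠ v → ({u, v} : Finset Node) ∈ G := by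
  intro u hu v hv huv
  have hmemN : ∀ {x : Node} {e : Finset Node}, e ∈ G → x ∈ e → x ∈ nodes G := by
    intro x e he hx
    exact Finset.mem_biUnion.2 ⟨e, he, hx⟩
  have hpend : ∀ w ∈ nodes G, ({w, pmap w} : Finset Node) ∈ G' := by
    intro w hw
    rw [hG']
    exact Finset.mem_union_right _ (Finset.mem_image_of_mem _ hw)
  have hcases : ∀ e ∈ G', e ∈ G ∨ ∃ w ∈ nodes G, e = {w, pmap w} := by
    intro e he
    rw [hG', Finset.mem_union] at he
    rcases he with h | h
    · exact Or.inl h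
    · rcases Finset.mem_image.1 h with ⟨w, hw, hwe⟩
      exact Or.inr ⟨w, hw, hwe.symm⟩
  have hpnotedge : ∀ w ∈ nodes G, ∀ e ∈ G, pmap w ∉ e := by
    intro w hw e he hmem
    exact hnew w hw (hmemN he hmem)
  have hedge_at_p : ∀ w ∈ nodes G, ∀ e ∈ G', pmap w ∈ e → e = {w, pmap w} := by
    intro w hw e he hmem
    rcases hcases e he with h | ⟨x, hx, rfl⟩
    · exact absurd hmem (hpnotedge w hw e h)
    · simp only [Finset.mem_insert, Finset.mem_singleton] at hmem
      rcases hmem with h | h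
      · exact absurd (h ▸ hx) (hnew w hw)
      · rw [hinj hw hx h]
  have hdegp : ∀ w ∈ nodes G, deg G' (pmap w) = 1 := by
    intro w hw
    rw [deg, Finset.card_eq_one]
    refine ⟨{w, pmap w}, ?_⟩
    ext e
    simp only [Finset.mem_filter, Finset.mem_singleton]
    constructor
    · rintro ⟨he, hm⟩; exact hedge_at_p w hw e he hm
    · rintro rfl
      exact ⟨hpend w hw, by simp⟩
  have hdegv : ∀ w ∈ nodes G, 2 ≤ deg G' w := by
    intro w hw
    rcases Finset.mem_biUnion.1 hw with ⟨e, he, hwe⟩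
    have he' : e ∈ G' := by rw [hG']; exact Finset.mem_union_left _ he
    have hne : e ≠ {w, pmap w} := by
      intro h
      exact hpnotedge w hw e he (h ▸ by simp)
    exact Finset.one_lt_card.2 ⟨e, Finset.mem_filter.2 ⟨he', hwe⟩,
      {w, pmap w}, Finset.mem_filter.2 ⟨hpend w hw, by simp⟩, hne⟩
  have hnodesG' : ∀ x ∈ nodes G', x ∈ nodes G ∨ ∃ w ∈ nodes G, x = pmap w := by
    intro x hx
    rcases Finset.mem_biUnion.1 hx with ⟨e, he, hxe⟩
    rcases hcases e he with h | ⟨w, hw, rfl⟩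
    · exact Or.inl (hmemN h hxe)
    · simp only [id, Finset.mem_insert, Finset.mem_singleton] at hxe
      rcases hxe with rfl | rfl
      · exact Or.inl hw
      · exact Or.inr ⟨w, hw, rfl⟩
  have hmemN' : ∀ w ∈ nodes G, w ∈ nodes G' :=
    fun w hw => Finset.mem_biUnion.2 ⟨{w, pmap w}, hpend w hw, by simp⟩
  have hmemP' : ∀ w ∈ nodes G, pmap w ∈ nodes G' :=
    fun w hw => Finset.mem_biUnion.2 ⟨{w, pmap w}, hpend w hw, by simp⟩
  have hports : ports G' = (nodes G).image pmap := by
    ext x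
    simp only [ports, Finset.mem_filter, Finset.mem_image]
    constructor
    · rintro ⟨hx, hd⟩
      rcases hnodesG' x hx with h | ⟨w, hw, rfl⟩
      · exact absurd hd (by have := hdegv x h; omega)
      · exact ⟨w, hw, rfl⟩
    · rintro ⟨w, hw, rfl⟩
      exact ⟨hmemP' w hw, hdegp w hw⟩
  have hinternal : internal G' = nodes G := by
    ext x
    simp only [internal, Finset.mem_filter]
    constructor
    · rintro ⟨hx, hd⟩
      rcases hnodesG' x hx with h | ⟨w, hw, rfl⟩
      · exact h
      · exact absurd (hdegp w hw) hd
    · intro hx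
      exact ⟨hmemN' x hx, by have := hdegv x hx; omega⟩
  have hpne : pmap u ≠ pmap v := fun h => huv (hinj hu hv h)
  set g : Finset Node := ((nodes G).image pmap) \ {pmap u, pmap v} with hg
  have hcardP : ((nodes G).image pmap).card = (nodes G).card :=
    Finset.card_image_of_injOn hinj
  have hsubuv : ({pmap u, pmap v} : Finset Node) ⊆ (nodes G).image pmap := by
    intro x hx
    simp only [Finset.mem_insert, Finset.mem_singleton] at hx
    rcases hx with rfl | rfl
    · exact Finset.mem_image_of_mem _ hu
    · exact Finset.mem_image_of_mem _ hv
  have hcardg : g.card = (nodes G).card - 2 := by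
    rw [hg, Finset.card_sdiff_of_subset hsubuv, hcardP,
      Finset.card_insert_of_notMem (by simp [hpne]), Finset.card_singleton]
  have hsig : sig G' = (nodes G).card % 2 := by rw [sig, hinternal]
  have hgK : g ∈ KP G' := by
    rw [homni.2]
    refine ⟨by rw [hports]; exact Finset.sdiff_subset, ?_⟩
    rw [hcardg, hsig]; omega
  obtain ⟨W, ⟨hWsub, hWdeg⟩, hWrest⟩ := hgK
  rw [hports] at hWrest
  rw [rest] at hWrest
  -- ports pmap u, pmap v are not covered by W
  have hpuW : ∀ w ∈ nodes G, w = u ∨ w = v → pmap w ∉ nodes W := by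
    intro w hw hwuv hmem
    have : pmap w ∈ g := by
      rw [← hWrest]
      exact Finset.mem_inter.2 ⟨Finset.mem_image_of_mem _ hw, hmem⟩
    rw [hg] at this
    have := (Finset.mem_sdiff.1 this).2
    rcases hwuv with rfl | rfl <;> simp at this
  -- all other pendant edges are in W
  have hpendW : ∀ w ∈ nodes G, w ≠ u → w ≠ v → ({w, pmap w} : Finset Node) ∈ W := by
    intro w hw hwu hwv
    have hpg : pmap w ∈ g := by
      rw [hg, Finset.mem_sdiff]
      refine ⟨Finset.mem_image_of_mem _ hw, ?_⟩
      simp only [Finset.mem_insert, Finset.mem_singleton]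
      rintro (h | h)
      · exact hwu (hinj hw hu h)
      · exact hwv (hinj hw hv h)
    have hmem : pmap w ∈ nodes W := by
      rw [← hWrest] at hpg
      exact (Finset.mem_inter.1 hpg).2
    rcases Finset.mem_biUnion.1 hmem with ⟨e, heW, hpe⟩
    have := hedge_at_p w hw e (hWsub heW) hpe
    rwa [this] at heW
  -- the unique W-edge at u
  have hdegu : deg W u = 1 := hWdeg u (hinternal ▸ hu)
  rw [deg, Finset.card_eq_one] at hdegu
  obtain ⟨e, he⟩ := hdegu
  have heW : e ∈ W ∧ u ∈ e := by
    have : e ∈ W.filter (fun e => u ∈ e) := he ▸ Finset.mem_singleton_self e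
    exact Finset.mem_filter.1 this
  -- e is an edge of G
  have heG : e ∈ G := by
    rcases hcases e (hWsub heW.1) with h | ⟨w, hw, rfl⟩
    · exact h
    · exfalso
      simp only [Finset.mem_insert, Finset.mem_singleton] at heW
      rcases heW.2 with rfl | rfl
      · exact hpuW u hu (Or.inl rfl)
          (Finset.mem_biUnion.2 ⟨{u, pmap u}, heW.1, by simp⟩)
      · exact hnew w hw hu
  -- e = {u, x} with x ≠ u
  obtain ⟨a, b, hab, habe⟩ := Finset.card_eq_two.1 (hG e heG)
  have hue : u ∈ ({a, b} : Finset Node) := habe ▸ heW.2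
  simp only [Finset.mem_insert, Finset.mem_singleton] at hue
  -- wlog: get x with e = {u, x}, x ≠ u
  obtain ⟨x, hxu, hex⟩ : ∃ x, x ≠ u ∧ e = {u, x} := by
    rcases hue with rfl | rfl
    · exact ⟨b, fun h => hab h.symm, habe⟩
    · exact ⟨a, hab, by rw [habe]; exact Finset.pair_comm a u⟩
  have hxG : x ∈ nodes G := hmemN heG (by rw [hex]; simp)
  -- x must be v
  have hxv : x = v := by
    by_contra hxv
    have hpw : ({x, pmap x} : Finset Node) ∈ W := hpendW x hxG hxu hxv
    have hne : e ≠ {x, pmap x} := by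
      intro h
      exact hpnotedge x hxG e heG (h ▸ by simp)
    have h1 : e ∈ W.filter (fun e => x ∈ e) :=
      Finset.mem_filter.2 ⟨heW.1, by rw [hex]; simp⟩
    have h2 : ({x, pmap x} : Finset Node) ∈ W.filter (fun e => x ∈ e) :=
      Finset.mem_filter.2 ⟨hpw, by simp⟩
    have : 2 ≤ deg W x := Finset.one_lt_card.2 ⟨e, h1, _, h2, hne⟩
    have := hWdeg x (hinternal ▸ hxG)
    omega
  rw [hxv] at hex
  rwa [← hex]
end Kekule
end

section
/- Let G be an omniconjugated graph, let p be a port of G with unique incident edge {p, v}, and let w be a node not among the nodes of G. Then the graph G' = (G \ {{p, v}}) ∪ { {p, w}, {w, v} }, obtained by replacing the edge to the port p by two edges through the new node w of degree 2, is omniconjugated. -/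
open scoped symmDiff

namespace Kekule

lemma mem_nodes_iff {G : Graph} {u : Node} : u ∈ nodes G ↔ ∃ e ∈ G, u ∈ e := by
  simp [nodes]

lemma deg_union (A B : Graph) (h : Disjoint A B) (u : Node) :
    deg (A ∪ B) u = deg A u + deg B u := by
  unfold deg
  rw [Finset.filter_union, Finset.card_union_of_disjoint
    (h.mono (Finset.filter_subset _ _) (Finset.filter_subset _ _))]

lemma deg_erase_mem (G : Graph) (e : Finset Node) (u : Node) (he : e ∈ G) (hu : u ∈ e) :
    deg (G.erase e) u = deg G u - 1 := by
  unfold deg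
  rw [Finset.filter_erase, Finset.card_erase_of_mem (by simp [he, hu])]

lemma deg_erase_notMem (G : Graph) (e : Finset Node) (u : Node) (hu : u ∉ e) :
    deg (G.erase e) u = deg G u := by
  unfold deg
  rw [Finset.filter_erase, Finset.erase_eq_of_notMem (by simp [hu])]

lemma mem_nodes_iff_deg_pos {G : Graph} {u : Node} : u ∈ nodes G ↔ 0 < deg G u := by
  rw [mem_nodes_iff, deg, Finset.card_pos, Finset.filter_nonempty_iff]

lemma deg_insert (W : Graph) (x : Finset Node) (hx : x ∉ W) (u : Node) :
    deg (insert x W) u = deg W u + (if u ∈ x then 1 else 0) := by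
  unfold deg
  rw [Finset.filter_insert]
  split_ifs with h
  · rw [Finset.card_insert_of_notMem (fun hc => hx (Finset.mem_filter.1 hc).1)]
  · rfl

lemma deg_pair (x y : Finset Node) (hxy : x ≠ y) (u : Node) :
    deg {x, y} u = (if u ∈ x then 1 else 0) + (if u ∈ y then 1 else 0) := by
  rw [show ({x, y} : Graph) = insert x {y} from rfl, deg_insert _ _ (by simp [hxy])]
  unfold deg
  rw [Finset.filter_singleton]
  split_ifs <;> simp

lemma nodes_subset {W G : Graph} (h : W ⊆ G) : nodes W ⊆ nodes G := by
  intro u hu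
  rw [mem_nodes_iff] at hu ⊢
  obtain ⟨e, he, hue⟩ := hu
  exact ⟨e, h he, hue⟩

lemma deg_eq_zero {W : Graph} {u : Node} (h : u ∉ nodes W) : deg W u = 0 := by
  rw [mem_nodes_iff_deg_pos] at h; omega

lemma nodes_insert (x : Finset Node) (W : Graph) : nodes (insert x W) = x ∪ nodes W := by
  simp [nodes, Finset.biUnion_insert]

lemma ports_subset_nodes (G : Graph) : ports G ⊆ nodes G := Finset.filter_subset _ _

/-- Replacing the edge at a port by two edges through a new
node of degree 2 preserves omniconjugation. -/
theorem statement18 (G : Graph) (hG : IsGraph G) (homni : Omniconjugated G)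
    (p v w : Node) (hp : p ∈ ports G) (hpv : ({p, v} : Finset Node) ∈ G)
    (hw : w ∉ nodes G) :
    Omniconjugated ((G \ {({p, v} : Finset Node)}) ∪
      {({p, w} : Finset Node), ({w, v} : Finset Node)}) := by
  obtain ⟨hcard, hKP⟩ := homni
  have hpP := hp
  rw [ports, Finset.mem_filter] at hpP
  obtain ⟨hpnodes, hdegp⟩ := hpP
  have hpv_ne : p ≠ v := by
    have h2 := hG _ hpv
    intro h; subst h; simp at h2
  have hvnodes : v ∈ nodes G := mem_nodes_iff.2 ⟨_, hpv, by simp⟩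
  have hwp : w ≠ p := fun h => hw (h ▸ hpnodes)
  have hwv : w ≠ v := fun h => hw (h ▸ hvnodes)
  set e : Finset Node := {p, v} with he_def
  set a : Finset Node := {p, w} with ha_def
  set b : Finset Node := {w, v} with hb_def
  set G2 : Graph := (G \ {e}) ∪ {a, b} with hG2_def
  -- membership basics
  have hpe : p ∈ e := by simp [he_def]
  have hve : v ∈ e := by simp [he_def]
  have hwe : w ∉ e := by simp [he_def, hwp, hwv]
  have hpa : p ∈ a := by simp [ha_def]
  have hwa : w ∈ a := by simp [ha_def]
  have hva : v ∉ a := by simp [ha_def, hpv_ne.symm, hwv.symm]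
  have hwb : w ∈ b := by simp [hb_def]
  have hvb : v ∈ b := by simp [hb_def]
  have hpb : p ∉ b := by simp [hb_def, hwp.symm, hpv_ne]
  have hab : a ≠ b := fun h => hpb (h ▸ hpa)
  have haG : a ∉ G := fun h => hw (mem_nodes_iff.2 ⟨a, h, hwa⟩)
  have hbG : b ∉ G := fun h => hw (mem_nodes_iff.2 ⟨b, h, hwb⟩)
  have hae : a ≠ e := fun h => hwe (h ▸ hwa)
  have hbe : b ≠ e := fun h => hwe (h ▸ hwb)
  have hGsd : G \ {e} = G.erase e := Finset.sdiff_singleton_eq_erase e G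
  have hmemG2 : ∀ f, f ∈ G2 ↔ (f ∈ G ∧ f ≠ e) ∨ f = a ∨ f = b := by
    intro f
    rw [hG2_def, hGsd]
    simp only [Finset.mem_union, Finset.mem_erase, Finset.mem_insert, Finset.mem_singleton]
    tauto
  have heG2 : e ∉ G2 := by
    intro h
    rcases (hmemG2 e).1 h with ⟨_, h'⟩ | h' | h'
    · exact h' rfl
    · exact hae h'.symm
    · exact hbe h'.symm
  have haG2 : a ∈ G2 := (hmemG2 a).2 (Or.inr (Or.inl rfl))
  have hbG2 : b ∈ G2 := (hmemG2 b).2 (Or.inr (Or.inr rfl))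
  have hdisj : Disjoint (G.erase e) ({a, b} : Graph) := by
    rw [Finset.disjoint_right]
    intro x hx hx'
    rcases Finset.mem_insert.1 hx with h | h
    · exact haG (Finset.mem_of_mem_erase (h ▸ hx'))
    · exact hbG (Finset.mem_of_mem_erase ((Finset.mem_singleton.1 h) ▸ hx'))
  have hG2u : G2 = G.erase e ∪ {a, b} := by rw [hG2_def, hGsd]
  -- degree computations
  have hdegGv : 0 < deg G v := mem_nodes_iff_deg_pos.1 hvnodes
  have hdeg2 : ∀ u, u ≠ w → deg G2 u = deg G u := by
    intro u huw
    rw [hG2u, deg_union _ _ hdisj, deg_pair _ _ hab]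
    by_cases hup : u = p
    · subst hup
      rw [deg_erase_mem _ _ _ hpv hpe]
      simp [hpa, hpb, hdegp]
    · by_cases huv : u = v
      · subst huv
        rw [deg_erase_mem _ _ _ hpv hve]
        simp [hva, hvb]
        omega
      · have hue : u ∉ e := by simp [he_def, hup, huv]
        have hua : u ∉ a := by simp [ha_def, hup, huw]
        have hub : u ∉ b := by simp [hb_def, huw, huv]
        rw [deg_erase_notMem _ _ _ hue]
        simp [hua, hub]
  have hdeg2w : deg G2 w = 2 := by
    rw [hG2u, deg_union _ _ hdisj, deg_pair _ _ hab,
      deg_erase_notMem _ _ _ hwe, deg_eq_zero hw]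
    simp [hwa, hwb]
  have hnodes2 : nodes G2 = insert w (nodes G) := by
    ext u
    rw [Finset.mem_insert]
    by_cases huw : u = w
    · subst huw
      simp [mem_nodes_iff_deg_pos, hdeg2w]
    · rw [mem_nodes_iff_deg_pos, hdeg2 u huw, ← mem_nodes_iff_deg_pos]
      simp [huw]
  have hports2 : ports G2 = ports G := by
    ext q
    rw [ports, ports, Finset.mem_filter, Finset.mem_filter, hnodes2, Finset.mem_insert]
    constructor
    · rintro ⟨hq1 | hq1, hq2⟩
      · subst hq1; rw [hdeg2w] at hq2; omega
      · have : q ≠ w := fun h => hw (h ▸ hq1)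
        exact ⟨hq1, by rwa [hdeg2 q this] at hq2⟩
    · rintro ⟨hq1, hq2⟩
      have : q ≠ w := fun h => hw (h ▸ hq1)
      exact ⟨Or.inr hq1, by rwa [hdeg2 q this]⟩
  have hinternal2 : internal G2 = insert w (internal G) := by
    ext q
    rw [internal, internal, Finset.mem_filter, Finset.mem_insert, Finset.mem_filter,
      hnodes2, Finset.mem_insert]
    constructor
    · rintro ⟨hq1 | hq1, hq2⟩
      · exact Or.inl hq1
      · have : q ≠ w := fun h => hw (h ▸ hq1)
        exact Or.inr ⟨hq1, by rwa [hdeg2 q this] at hq2⟩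
    · rintro (hq1 | ⟨hq1, hq2⟩)
      · subst hq1; exact ⟨Or.inl rfl, by rw [hdeg2w]; omega⟩
      · have : q ≠ w := fun h => hw (h ▸ hq1)
        exact ⟨Or.inr hq1, by rwa [hdeg2 q this]⟩
  have hwint : w ∉ internal G := fun h => hw (Finset.mem_filter.1 h).1
  have hsig2 : sig G2 = ((internal G).card + 1) % 2 := by
    rw [sig, hinternal2, Finset.card_insert_of_notMem hwint]
  have hsigG : sig G = (internal G).card % 2 := rfl
  have hwP : w ∉ ports G := fun h => hw (ports_subset_nodes G h)
  -- the unique edge at the port p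
  have hpfilter : G.filter (fun f => p ∈ f) = {e} := by
    have h1 : (G.filter (fun f => p ∈ f)).card = 1 := hdegp
    obtain ⟨x, hx⟩ := Finset.card_eq_one.1 h1
    have : e ∈ G.filter (fun f => p ∈ f) := Finset.mem_filter.2 ⟨hpv, hpe⟩
    rw [hx] at this ⊢
    rw [Finset.mem_singleton] at this
    rw [this]
  have hportW : ∀ W : Graph, W ⊆ G → (p ∈ nodes W ↔ e ∈ W) := by
    intro W hWG
    constructor
    · intro h
      obtain ⟨f, hf, hpf⟩ := mem_nodes_iff.1 h
      have : f ∈ G.filter (fun f => p ∈ f) := Finset.mem_filter.2 ⟨hWG hf, hpf⟩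
      rw [hpfilter, Finset.mem_singleton] at this
      exact this ▸ hf
    · intro h
      exact mem_nodes_iff.2 ⟨e, h, hpe⟩
  -- internal nodes are not p nor w
  have hintne : ∀ u ∈ internal G, u ≠ p ∧ u ≠ w := by
    intro u hu
    rw [internal, Finset.mem_filter] at hu
    exact ⟨fun h => hu.2 (h ▸ hdegp), fun h => hw (h ▸ hu.1)⟩
  -- rest computations
  have restA : ∀ W : Graph, W ⊆ G → e ∉ W →
      p ∉ rest W (ports G) ∧ rest (insert a W) (ports G) = insert p (rest W (ports G)) := by
    intro W hWG heW
    constructor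
    · intro h
      exact heW ((hportW W hWG).1 (Finset.mem_inter.1 h).2)
    · rw [rest, rest, nodes_insert]
      ext q
      simp only [Finset.mem_inter, Finset.mem_union, Finset.mem_insert]
      constructor
      · rintro ⟨hq1, hq2 | hq2⟩
        · rcases Finset.mem_insert.1 (ha_def ▸ hq2) with h | h
          · exact Or.inl h
          · rw [Finset.mem_singleton] at h
            exact absurd (h ▸ hq1) hwP
        · exact Or.inr ⟨hq1, hq2⟩
      · rintro (h | ⟨hq1, hq2⟩)
        · exact ⟨h ▸ hp, Or.inl (h ▸ hpa)⟩
        · exact ⟨hq1, Or.inr hq2⟩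
  have restB : ∀ W : Graph, W ⊆ G → e ∈ W →
      p ∈ rest W (ports G) ∧
      rest (insert b (W.erase e)) (ports G) = (rest W (ports G)).erase p := by
    intro W hWG heW
    constructor
    · exact Finset.mem_inter.2 ⟨hp, (hportW W hWG).2 heW⟩
    · rw [rest, rest, nodes_insert]
      ext q
      simp only [Finset.mem_inter, Finset.mem_union, Finset.mem_erase]
      constructor
      · rintro ⟨hq1, hq2 | hq2⟩
        · rcases Finset.mem_insert.1 (hb_def ▸ hq2) with h | h
          · exact absurd (h ▸ hq1) hwP
          · rw [Finset.mem_singleton] at h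
            subst h
            exact ⟨hpv_ne.symm, hq1, mem_nodes_iff.2 ⟨e, heW, hve⟩⟩
        · obtain ⟨f, hf, hqf⟩ := mem_nodes_iff.1 hq2
          have hfW : f ∈ W := Finset.mem_of_mem_erase hf
          refine ⟨?_, hq1, mem_nodes_iff.2 ⟨f, hfW, hqf⟩⟩
          intro hqp
          have : f ∈ G.filter (fun f => p ∈ f) := Finset.mem_filter.2 ⟨hWG hfW, hqp ▸ hqf⟩
          rw [hpfilter, Finset.mem_singleton] at this
          exact (Finset.mem_erase.1 hf).1 this
      · rintro ⟨hqp, hq1, hq2⟩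
        obtain ⟨f, hf, hqf⟩ := mem_nodes_iff.1 hq2
        refine ⟨hq1, ?_⟩
        by_cases hfe : f = e
        · subst hfe
          rcases Finset.mem_insert.1 (he_def ▸ hqf) with h | h
          · exact absurd h hqp
          · rw [Finset.mem_singleton] at h
            exact Or.inl (h ▸ hvb)
        · exact Or.inr (mem_nodes_iff.2 ⟨f, Finset.mem_erase.2 ⟨hfe, hf⟩, hqf⟩)
  -- Kekulé transfers
  have kekA : ∀ W : Graph, IsKekule G W → e ∉ W → IsKekule G2 (insert a W) := by
    intro W ⟨hWG, hWdeg⟩ heW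
    constructor
    · intro f hf
      rcases Finset.mem_insert.1 hf with h | h
      · exact h ▸ haG2
      · exact (hmemG2 f).2 (Or.inl ⟨hWG h, fun hh => heW (hh ▸ h)⟩)
    · intro u hu
      rw [hinternal2] at hu
      have haW : a ∉ W := fun h => haG (hWG h)
      rw [deg_insert _ _ haW]
      rcases Finset.mem_insert.1 hu with h | h
      · subst h
        rw [deg_eq_zero (fun hh => hw (nodes_subset hWG hh))]
        simp [hwa]
      · obtain ⟨hup, huw⟩ := hintne u h
        have hua : u ∉ a := by simp [ha_def, hup, huw]
        rw [hWdeg u h]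
        simp [hua]
  have kekB : ∀ W : Graph, IsKekule G W → e ∈ W → IsKekule G2 (insert b (W.erase e)) := by
    intro W ⟨hWG, hWdeg⟩ heW
    constructor
    · intro f hf
      rcases Finset.mem_insert.1 hf with h | h
      · exact h ▸ hbG2
      · obtain ⟨hfe, hfW⟩ := Finset.mem_erase.1 h
        exact (hmemG2 f).2 (Or.inl ⟨hWG hfW, hfe⟩)
    · intro u hu
      rw [hinternal2] at hu
      have hbW : b ∉ W.erase e := fun h => hbG (hWG (Finset.mem_of_mem_erase h))
      rw [deg_insert _ _ hbW]
      rcases Finset.mem_insert.1 hu with h | h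
      · subst h
        rw [deg_erase_notMem _ _ _ hwe,
          deg_eq_zero (fun hh => hw (nodes_subset hWG hh))]
        simp [hwb]
      · obtain ⟨hup, huw⟩ := hintne u h
        by_cases huv : u = v
        · subst huv
          rw [deg_erase_mem _ _ _ heW hve, hWdeg u h]
          simp [hvb]
        · have hue : u ∉ e := by simp [he_def, hup, huv]
          have hub : u ∉ b := by simp [hb_def, huw, huv]
          rw [deg_erase_notMem _ _ _ hue, hWdeg u h]
          simp [hub]
  have kekC : ∀ W2 : Graph, IsKekule G2 W2 → a ∈ W2 → b ∉ W2 →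
      IsKekule G (W2.erase a) := by
    intro W2 ⟨hWG2, hWdeg2⟩ haW2 hbW2
    constructor
    · intro f hf
      obtain ⟨hfa, hfW2⟩ := Finset.mem_erase.1 hf
      rcases (hmemG2 f).1 (hWG2 hfW2) with ⟨h, _⟩ | h | h
      · exact h
      · exact absurd h hfa
      · exact absurd (h ▸ hfW2) hbW2
    · intro u hu
      obtain ⟨hup, huw⟩ := hintne u hu
      have hua : u ∉ a := by simp [ha_def, hup, huw]
      rw [deg_erase_notMem _ _ _ hua]
      exact hWdeg2 u (hinternal2 ▸ Finset.mem_insert_of_mem hu)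
  have kekD : ∀ W2 : Graph, IsKekule G2 W2 → b ∈ W2 → a ∉ W2 →
      IsKekule G (insert e (W2.erase b)) := by
    intro W2 ⟨hWG2, hWdeg2⟩ hbW2 haW2
    have hsub : W2.erase b ⊆ G := by
      intro f hf
      obtain ⟨hfb, hfW2⟩ := Finset.mem_erase.1 hf
      rcases (hmemG2 f).1 (hWG2 hfW2) with ⟨h, _⟩ | h | h
      · exact h
      · exact absurd (h ▸ hfW2) haW2
      · exact absurd h hfb
    constructor
    · intro f hf
      rcases Finset.mem_insert.1 hf with h | h
      · exact h ▸ hpv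
      · exact hsub h
    · intro u hu
      obtain ⟨hup, huw⟩ := hintne u hu
      have heW2 : e ∉ W2.erase b := fun h => heG2 (hWG2 (Finset.mem_of_mem_erase h))
      have hudeg : deg W2 u = 1 := hWdeg2 u (hinternal2 ▸ Finset.mem_insert_of_mem hu)
      rw [deg_insert _ _ heW2]
      by_cases huv : u = v
      · subst huv
        rw [deg_erase_mem _ _ _ hbW2 hvb, hudeg]
        simp [hve]
      · have hue : u ∉ e := by simp [he_def, hup, huv]
        have hub : u ∉ b := by simp [hb_def, huw, huv]
        rw [deg_erase_notMem _ _ _ hub, hudeg]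
        simp [hue]
  -- exactly one of a, b in a Kekulé state of G2
  have honeof : ∀ W2 : Graph, IsKekule G2 W2 → (a ∈ W2 ∧ b ∉ W2) ∨ (b ∈ W2 ∧ a ∉ W2) := by
    intro W2 hk
    have hdw : deg W2 w = 1 := hk.2 w (hinternal2 ▸ Finset.mem_insert_self w _)
    rw [deg] at hdw
    obtain ⟨f, hf⟩ := Finset.card_eq_one.1 hdw
    have hfab : f = a ∨ f = b := by
      have hfmem : f ∈ W2.filter (fun e => w ∈ e) := hf ▸ Finset.mem_singleton_self f
      obtain ⟨hfW2, hwf⟩ := Finset.mem_filter.1 hfmem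
      rcases (hmemG2 f).1 (hk.1 hfW2) with ⟨h, _⟩ | h | h
      · exact absurd (mem_nodes_iff.2 ⟨f, h, hwf⟩) hw
      · exact Or.inl h
      · exact Or.inr h
    have hfW2 : f ∈ W2 := by
      have := hf ▸ Finset.mem_singleton_self f
      exact (Finset.mem_filter.1 this).1
    rcases hfab with h | h
    · subst h
      refine Or.inl ⟨hfW2, fun hbW2 => ?_⟩
      have : b ∈ W2.filter (fun e => w ∈ e) := Finset.mem_filter.2 ⟨hbW2, hwb⟩
      rw [hf, Finset.mem_singleton] at this
      exact hab this.symm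
    · subst h
      refine Or.inr ⟨hfW2, fun haW2 => ?_⟩
      have : a ∈ W2.filter (fun e => w ∈ e) := Finset.mem_filter.2 ⟨haW2, hwa⟩
      rw [hf, Finset.mem_singleton] at this
      exact hab this
  -- conclusion
  constructor
  · rw [hports2]; exact hcard
  · ext g
    simp only [Set.mem_setOf_eq]
    constructor
    · rintro ⟨W2, hk2, hrest⟩
      rw [hports2] at hrest
      rcases honeof W2 hk2 with ⟨ha2, hb2⟩ | ⟨hb2, ha2⟩
      · have hkW := kekC W2 hk2 ha2 hb2
        set W := W2.erase a with hW_def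
        have heW : e ∉ W := fun h => heG2 (hk2.1 (Finset.mem_of_mem_erase h))
        obtain ⟨hpr, hrw⟩ := restA W hkW.1 heW
        have hW2eq : W2 = insert a W := (Finset.insert_erase ha2).symm
        have hKg : rest W (ports G) ∈ KP G := ⟨W, hkW, rfl⟩
        rw [hKP] at hKg
        obtain ⟨hsub, hparcard⟩ := hKg
        rw [← hrest, hW2eq, hrw]
        refine ⟨?_, ?_⟩
        · rw [hports2]
          exact Finset.insert_subset hp hsub
        · rw [Finset.card_insert_of_notMem hpr, hsig2]
          rw [hsigG] at hparcard
          omega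
      · have hkW := kekD W2 hk2 hb2 ha2
        set W := insert e (W2.erase b) with hW_def
        have heW : e ∈ W := Finset.mem_insert_self e _
        have heW2b : e ∉ W2.erase b := fun h => heG2 (hk2.1 (Finset.mem_of_mem_erase h))
        have hWe : W.erase e = W2.erase b := by
          rw [hW_def, Finset.erase_insert heW2b]
        have hW2eq : W2 = insert b (W.erase e) := by
          rw [hWe, Finset.insert_erase hb2]
        obtain ⟨hpr, hrw⟩ := restB W hkW.1 heW
        have hKg : rest W (ports G) ∈ KP G := ⟨W, hkW, rfl⟩
        rw [hKP] at hKg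
        obtain ⟨hsub, hparcard⟩ := hKg
        rw [← hrest, hW2eq, hrw]
        have hone : 1 ≤ (rest W (ports G)).card := Finset.card_pos.2 ⟨p, hpr⟩
        refine ⟨?_, ?_⟩
        · rw [hports2]
          exact (Finset.erase_subset p _).trans hsub
        · rw [Finset.card_erase_of_mem hpr, hsig2]
          rw [hsigG] at hparcard
          omega
    · rintro ⟨hgsub, hgcard⟩
      rw [hports2] at hgsub
      rw [hsig2] at hgcard
      by_cases hpg : p ∈ g
      · have hg' : g.erase p ∈ KP G := by
          rw [hKP]
          refine ⟨(Finset.erase_subset p g).trans hgsub, ?_⟩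
          rw [Finset.card_erase_of_mem hpg, hsigG]
          have hone : 1 ≤ g.card := Finset.card_pos.2 ⟨p, hpg⟩
          omega
        obtain ⟨W, hkW, hrW⟩ := hg'
        have hpnW : p ∉ nodes W := by
          intro h
          have : p ∈ rest W (ports G) := Finset.mem_inter.2 ⟨hp, h⟩
          rw [hrW] at this
          exact (Finset.mem_erase.1 this).1 rfl
        have heW : e ∉ W := fun h => hpnW ((hportW W hkW.1).2 h)
        refine ⟨insert a W, kekA W hkW heW, ?_⟩
        rw [hports2, (restA W hkW.1 heW).2, hrW, Finset.insert_erase hpg]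
      · have hg' : insert p g ∈ KP G := by
          rw [hKP]
          refine ⟨Finset.insert_subset hp hgsub, ?_⟩
          rw [Finset.card_insert_of_notMem hpg, hsigG]
          omega
        obtain ⟨W, hkW, hrW⟩ := hg'
        have hpnW : p ∈ nodes W := by
          have : p ∈ rest W (ports G) := by
            rw [hrW]; exact Finset.mem_insert_self p g
          exact (Finset.mem_inter.1 this).2
        have heW : e ∈ W := (hportW W hkW.1).1 hpnW
        refine ⟨insert b (W.erase e), kekB W hkW heW, ?_⟩
        rw [hports2, (restB W hkW.1 heW).2, hrW, Finset.erase_insert hpg]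

end Kekule
end
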